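/- arXiv:1609.04512 — 8 statements merged into one kernel-verified Lean document; each statement's English description precedes it below -/
import Mathlib

section
/- For a platoon scheduling instance in which all release times and all lengths are integers, and for any integer d, if there exists a valid schedule with delay at most d, then there exists a valid schedule with delay at most d in which every crossing time is an integer (for example, the schedule obtained by replacing each crossing time by its floor). -/
/-- A platoon scheduling instance: `n` platoons, each with an incoming lane,
a release time and a positive length; platoons on the same lane occupy disjoint
ranges of time; a symmetric irreflexive incompatibility relation says which pairs
of platoons may not occupy the intersection simultaneously. -/
structure PlatoonInstance (n : ℕ) where
  lane : Fin n → ℕ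
  r : Fin n → ℝ
  len : Fin n → ℝ
  len_pos : ∀ i, 0 < len i
  incompat : Fin n → Fin n → Prop
  incompat_symm : ∀ i j, incompat i j → incompat j i
  incompat_irrefl : ∀ i, ¬ incompat i i
  lane_disjoint : ∀ i j, i ≠ j → lane i = lane j →
    r i + len i ≤ r j ∨ r j + len j ≤ r i

/-- A schedule (an assignment of a crossing time to each platoon) is valid if
(1) each crossing time is at least the release time; (2) platoons on the same lane
cross in release order, one finishing before the next one crosses; (3) the open
crossing intervals of incompatible platoons are disjoint. -/
def Valid {n : ℕ} (I : PlatoonInstance n) (c : Fin n → ℝ) : Prop :=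
  (∀ i, I.r i ≤ c i) ∧
  (∀ i j, i ≠ j → I.lane i = I.lane j → I.r i + I.len i ≤ I.r j →
    c i + I.len i ≤ c j) ∧
  (∀ i j, I.incompat i j →
    Disjoint (Set.Ioo (c i) (c i + I.len i)) (Set.Ioo (c j) (c j + I.len j)))

private lemma floor_add_le {a b L : ℝ} (z : ℤ) (hL : L = z) (hab : a + L ≤ b) :
    (⌊a⌋ : ℝ) + L ≤ (⌊b⌋ : ℝ) := by
  subst hL
  have h1 : ⌊a⌋ + z ≤ ⌊b⌋ := by
    rw [← Int.floor_add_intCast a z]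
    exact Int.floor_le_floor hab
  exact_mod_cast h1

/-- If release times and lengths are integers and there is a valid schedule with
delay at most an integer `d`, then there is such a schedule whose crossing times
are all integers (e.g. replace each crossing time by its floor). -/
theorem stmt0 {n : ℕ} (I : PlatoonInstance n)
    (hr : ∀ i, ∃ z : ℤ, I.r i = z) (hlen : ∀ i, ∃ z : ℤ, I.len i = z)
    (d : ℤ)
    (h : ∃ c, Valid I c ∧ ∀ i, c i - I.r i ≤ (d : ℝ)) :
    ∃ c, Valid I c ∧ (∀ i, c i - I.r i ≤ (d : ℝ)) ∧ (∀ i, ∃ z : ℤ, c i = z) := by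
  obtain ⟨c, ⟨h1, h2, h3⟩, hd⟩ := h
  refine ⟨fun i => (⌊c i⌋ : ℝ), ⟨?_, ?_, ?_⟩, ?_, fun i => ⟨⌊c i⌋, rfl⟩⟩
  · intro i
    obtain ⟨z, hz⟩ := hr i
    show I.r i ≤ (⌊c i⌋ : ℝ)
    rw [hz]
    exact_mod_cast Int.le_floor.2 (hz ▸ h1 i)
  · intro i j hij hlane hrel
    obtain ⟨z, hz⟩ := hlen i
    exact floor_add_le z hz (h2 i j hij hlane hrel)
  · intro i j hinc
    have hd := h3 i j hinc
    obtain ⟨zi, hzi⟩ := hlen i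
    obtain ⟨zj, hzj⟩ := hlen j
    -- original intervals disjoint and nonempty: one ends before other starts
    have hkey : c i + I.len i ≤ c j ∨ c j + I.len j ≤ c i := by
      by_contra hcon
      push_neg at hcon
      obtain ⟨hc1, hc2⟩ := hcon
      have hne : (Set.Ioo (c i) (c i + I.len i) ∩ Set.Ioo (c j) (c j + I.len j)).Nonempty := by
        rw [Set.Ioo_inter_Ioo]
        rw [Set.nonempty_Ioo]
        exact max_lt (lt_min (lt_add_of_pos_right _ (I.len_pos i)) hc2)
          (lt_min hc1 (lt_add_of_pos_right _ (I.len_pos j)))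
      exact hne.not_subset_empty (Set.disjoint_iff.mp hd)
    have hdisj : (⌊c i⌋ : ℝ) + I.len i ≤ (⌊c j⌋ : ℝ) ∨ (⌊c j⌋ : ℝ) + I.len j ≤ (⌊c i⌋ : ℝ) := by
      rcases hkey with hk | hk
      · exact Or.inl (floor_add_le zi hzi hk)
      · exact Or.inr (floor_add_le zj hzj hk)
    rw [Set.Ioo_disjoint_Ioo]
    rcases hdisj with hk | hk
    · exact le_trans (min_le_left _ _) (le_trans hk (le_max_right _ _))
    · exact le_trans (min_le_right _ _) (le_trans hk (le_max_left _ _))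
  · intro i
    obtain ⟨z, hz⟩ := hr i
    have : (d : ℝ) + I.r i = ((d + z : ℤ) : ℝ) := by push_cast [hz]; ring
    have hfl : (⌊c i⌋ : ℝ) ≤ c i := Int.floor_le _
    linarith [hd i]
end

section
/- For any platoon scheduling instance in which all release times and all lengths are integers, there exists a minimum-delay valid schedule: a valid schedule whose delay equals the infimum, over all valid schedules, of the schedule delay; moreover this minimum delay is an integer. -/
/-- The delay of a schedule: the maximum (supremum) delay of its platoons. -/
noncomputable def scheduleDelay {n : ℕ} (I : PlatoonInstance n) (c : Fin n → ℝ) : ℝ :=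
  ⨆ i, (c i - I.r i)

/-- Disjointness of two nonempty open intervals is equivalent to one ending
before the other begins. -/
theorem ioo_disj (a b p q : ℝ) (hp : 0 < p) (hq : 0 < q) :
    Disjoint (Set.Ioo a (a+p)) (Set.Ioo b (b+q)) ↔ a + p ≤ b ∨ b + q ≤ a := by
  rw [Set.Ioo_disjoint_Ioo]
  constructor
  · intro h
    rcases min_le_iff.1 h with h1 | h1 <;> rcases le_max_iff.1 h1 with h2 | h2
    · exact absurd h2 (by linarith)
    · exact Or.inl h2
    · exact Or.inr h2
    · exact absurd h2 (by linarith)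
  · rintro (h | h)
    · exact le_trans (min_le_left _ _) (h.trans (le_max_right _ _))
    · exact le_trans (min_le_right _ _) (h.trans (le_max_left _ _))

/-- The delay of a schedule is attained by some platoon (for `n > 0`). -/
theorem delay_attained {n : ℕ} [Nonempty (Fin n)] (I : PlatoonInstance n) (c : Fin n → ℝ) :
    ∃ i, scheduleDelay I c = c i - I.r i := by
  obtain ⟨i, hi⟩ := Finite.exists_max (fun i => c i - I.r i)
  refine ⟨i, le_antisymm (ciSup_le hi) ?_⟩
  exact le_ciSup (Set.Finite.bddAbove (Set.finite_range (fun j => c j - I.r j))) i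

theorem le_delay {n : ℕ} (I : PlatoonInstance n) (c : Fin n → ℝ) (i : Fin n) :
    c i - I.r i ≤ scheduleDelay I c :=
  le_ciSup (Set.Finite.bddAbove (Set.finite_range (fun j => c j - I.r j))) i

/-- Rounding down a valid schedule (with integer data) stays valid. -/
theorem floor_valid {n : ℕ} (I : PlatoonInstance n)
    (hr : ∀ i, ∃ z : ℤ, I.r i = z) (hlen : ∀ i, ∃ z : ℤ, I.len i = z)
    (c : Fin n → ℝ) (hc : Valid I c) :
    Valid I (fun i => ((⌊c i⌋ : ℤ) : ℝ)) := by
  obtain ⟨hc1, hc2, hc3⟩ := hc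
  have key : ∀ i j : Fin n, c i + I.len i ≤ c j →
      ((⌊c i⌋ : ℤ) : ℝ) + I.len i ≤ ((⌊c j⌋ : ℤ) : ℝ) := by
    intro i j h
    obtain ⟨z, hz⟩ := hlen i
    rw [hz] at h ⊢
    have : ⌊c i⌋ + z ≤ ⌊c j⌋ := by
      rw [← Int.floor_add_intCast]
      exact Int.floor_le_floor h
    exact_mod_cast this
  refine ⟨?_, ?_, ?_⟩
  · intro i
    obtain ⟨z, hz⟩ := hr i
    dsimp only
    rw [hz]
    exact_mod_cast Int.le_floor.2 (hz ▸ hc1 i)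
  · intro i j hij hl hrl
    exact key i j (hc2 i j hij hl hrl)
  · intro i j hin
    rw [ioo_disj _ _ _ _ (I.len_pos i) (I.len_pos j)]
    rcases (ioo_disj _ _ _ _ (I.len_pos i) (I.len_pos j)).1 (hc3 i j hin) with h | h
    · exact Or.inl (key i j h)
    · exact Or.inr (key j i h)

/-- For integer release times and lengths, a minimum-delay valid schedule exists:
a valid schedule whose delay equals the infimum, over all valid schedules, of the
schedule delay; moreover this minimum delay is an integer. -/
theorem stmt2 {n : ℕ} (I : PlatoonInstance n)
    (hr : ∀ i, ∃ z : ℤ, I.r i = z) (hlen : ∀ i, ∃ z : ℤ, I.len i = z) :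
    ∃ c : Fin n → ℝ, Valid I c ∧
      scheduleDelay I c = sInf {d : ℝ | ∃ c', Valid I c' ∧ scheduleDelay I c' = d} ∧
      ∃ z : ℤ, scheduleDelay I c = z := by
  classical
  rcases Nat.eq_zero_or_pos n with hn | hn
  · subst hn
    have hvalid0 : ∀ c' : Fin 0 → ℝ, Valid I c' :=
      fun c' => ⟨fun i => i.elim0, fun i => i.elim0, fun i => i.elim0⟩
    have hall : ∀ c' : Fin 0 → ℝ, scheduleDelay I c' = 0 := fun c' =>
      Real.iSup_of_isEmpty _
    have hset : {d : ℝ | ∃ c', Valid I c' ∧ scheduleDelay I c' = d} = {0} := by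
      ext d
      simp only [Set.mem_setOf_eq, Set.mem_singleton_iff]
      constructor
      · rintro ⟨c', -, rfl⟩; exact hall c'
      · rintro rfl; exact ⟨fun _ => 0, hvalid0 _, hall _⟩
    refine ⟨fun _ => 0, hvalid0 _, ?_, 0, by simpa using hall _⟩
    rw [hset, csInf_singleton]
    exact hall _
  have hne : Nonempty (Fin n) := ⟨⟨0, hn⟩⟩
  choose rz hrz using hr
  choose lz hlz using hlen
  -- nonnegativity of delays
  have hnonneg : ∀ c : Fin n → ℝ, Valid I c → 0 ≤ scheduleDelay I c := by
    intro c hc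
    have i0 := Classical.arbitrary (Fin n)
    exact le_trans (by linarith [hc.1 i0]) (le_delay I c i0)
  -- construction of an integer valid schedule
  set σ := Tuple.sort I.r with hσ
  have hσmono : Monotone (I.r ∘ σ) := Tuple.monotone_sort I.r
  set k : Fin n → Fin n := fun i => σ.symm i with hkdef
  have hk : ∀ i j, I.r i < I.r j → k i < k j := by
    intro i j hij
    by_contra h
    push_neg at h
    have := hσmono h
    simp only [Function.comp_apply, hkdef, Equiv.apply_symm_apply] at this
    linarith
  have hkinj : Function.Injective k := fun a b hab => σ.symm.injective hab
  set M : ℤ := Finset.univ.sup' Finset.univ_nonempty rz with hMdef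
  set L : ℤ := Finset.univ.sup' Finset.univ_nonempty lz with hLdef
  have hM : ∀ i, I.r i ≤ (M : ℝ) := by
    intro i; rw [hrz i]
    exact_mod_cast Finset.le_sup' rz (Finset.mem_univ i)
  have hL : ∀ i, I.len i ≤ (L : ℝ) := by
    intro i; rw [hlz i]
    exact_mod_cast Finset.le_sup' lz (Finset.mem_univ i)
  have hL0 : (0:ℝ) < L := lt_of_lt_of_le (I.len_pos (Classical.arbitrary _)) (hL _)
  set c0 : Fin n → ℝ := fun i => (M : ℝ) + ((k i : ℕ) : ℝ) * (L : ℝ) with hc0def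
  have hstep : ∀ x y : Fin n, k x < k y → c0 x + I.len x ≤ c0 y := by
    intro x y hxy
    have h1 : ((k x : ℕ) : ℝ) + 1 ≤ ((k y : ℕ) : ℝ) := by exact_mod_cast hxy
    have h2 : (((k x : ℕ) : ℝ) + 1) * L ≤ ((k y : ℕ) : ℝ) * L :=
      mul_le_mul_of_nonneg_right h1 hL0.le
    have := hL x
    simp only [hc0def]
    nlinarith
  have hvalid0 : Valid I c0 := by
    refine ⟨?_, ?_, ?_⟩
    · intro i
      have : (0:ℝ) ≤ ((k i : ℕ) : ℝ) * L := by positivity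
      have := hM i
      simp only [hc0def]; linarith
    · intro i j hij hl hrl
      exact hstep i j (hk i j (by linarith [I.len_pos i]))
    · intro i j hin
      have hij : i ≠ j := fun h => I.incompat_irrefl i (h ▸ hin)
      rw [ioo_disj _ _ _ _ (I.len_pos i) (I.len_pos j)]
      rcases lt_or_gt_of_ne (fun h => hij (hkinj h)) with h | h
      · exact Or.inl (hstep i j h)
      · exact Or.inr (hstep j i h)
  -- the predicate of integer achievable delays
  set P : ℤ → Prop := fun z => ∃ c, Valid I c ∧ scheduleDelay I c = (z : ℝ) with hPdef
  have hPinh : ∃ z, P z := by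
    obtain ⟨i, hi⟩ := delay_attained I c0
    refine ⟨M + (k i : ℕ) * L - rz i, c0, hvalid0, ?_⟩
    rw [hi, hrz i]
    simp only [hc0def]
    push_cast
    ring
  have hPbdd : ∃ b : ℤ, ∀ z, P z → b ≤ z := by
    refine ⟨0, fun z hz => ?_⟩
    obtain ⟨c, hc, hd⟩ := hz
    exact_mod_cast hd ▸ hnonneg c hc
  obtain ⟨d₀, ⟨cstar, hcstar, hdstar⟩, hleast⟩ := Int.exists_least_of_bdd hPbdd hPinh
  -- d₀ is a lower bound for all achievable delays
  have hlb : ∀ d ∈ {d : ℝ | ∃ c', Valid I c' ∧ scheduleDelay I c' = d}, (d₀ : ℝ) ≤ d := by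
    rintro d ⟨c, hc, rfl⟩
    set c' : Fin n → ℝ := fun i => ((⌊c i⌋ : ℤ) : ℝ) with hc'def
    have hc'valid : Valid I c' := floor_valid I (fun i => ⟨rz i, hrz i⟩)
      (fun i => ⟨lz i, hlz i⟩) c hc
    obtain ⟨i, hi⟩ := delay_attained I c'
    have hPe : P (⌊c i⌋ - rz i) := by
      refine ⟨c', hc'valid, ?_⟩
      rw [hi, hrz i]
      push_cast
      ring
    have h1 : (d₀ : ℝ) ≤ ((⌊c i⌋ - rz i : ℤ) : ℝ) := by exact_mod_cast hleast _ hPe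
    have h2 : scheduleDelay I c' ≤ scheduleDelay I c := by
      apply ciSup_le
      intro j
      exact le_trans (by simp only [hc'def]; linarith [Int.floor_le (c j)]) (le_delay I c j)
    rw [hi, hrz i] at h2
    have : ((⌊c i⌋ - rz i : ℤ) : ℝ) ≤ scheduleDelay I c := by push_cast; linarith
    linarith
  refine ⟨cstar, hcstar, ?_, d₀, hdstar⟩
  rw [hdstar]
  exact le_antisymm (le_csInf ⟨_, cstar, hcstar, hdstar⟩ hlb)
    (csInf_le ⟨(d₀ : ℝ), hlb⟩ ⟨cstar, hcstar, hdstar⟩)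
end

section
/- For a Y-merge platoon scheduling instance and any real delay bound d, the greedy schedule with parameter d is a valid schedule, and the greedy schedule has delay at most d if and only if some valid schedule with delay at most d exists. (Equivalently: if any valid schedule with delay at most d exists, then the greedy schedule has delay at most d.) -/
/-- A platoon is a pair (release time, length). -/
abbrev Platoon := ℝ × ℝ

/-- A lane: a list of platoons in release order, with positive lengths and
disjoint release ranges (each finishes being released before the next one starts). -/
def LaneOK (P : List Platoon) : Prop :=
  (∀ p ∈ P, 0 < p.2) ∧ P.Chain' (fun p q => p.1 + p.2 ≤ q.1)

/-- The greedy schedule with parameter `d` for a Y merge, starting with current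
finish time `t` and the remaining queues of the two lanes (`false` = first lane,
`true` = second lane). At each step, `p` is the first remaining platoon with the
earlier release time and `p'` the first remaining platoon on the other lane; if
there is no `p'`, or if `max t r + ℓ - r' ≤ d`, then `p` crosses at `max t r`;
otherwise `p'` crosses at `max t r'`. The output lists, in crossing order, each
platoon together with its lane and its crossing time. -/
noncomputable def greedy (d : ℝ) : ℝ → List Platoon → List Platoon → List (Bool × Platoon × ℝ)
  | _, [], [] => []
  | t, (r, l) :: A, [] => (false, (r, l), max t r) :: greedy d (max t r + l) A []
  | t, [], (r, l) :: B => (true, (r, l), max t r) :: greedy d (max t r + l) [] B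
  | t, (r, l) :: A, (r', l') :: B =>
    if r ≤ r' then
      if max t r + l - r' ≤ d then
        (false, (r, l), max t r) :: greedy d (max t r + l) A ((r', l') :: B)
      else
        (true, (r', l'), max t r') :: greedy d (max t r' + l') ((r, l) :: A) B
    else
      if max t r' + l' - r ≤ d then
        (true, (r', l'), max t r') :: greedy d (max t r' + l') ((r, l) :: A) B
      else
        (false, (r, l), max t r) :: greedy d (max t r + l) A ((r', l') :: B)
  termination_by t A B => A.length + B.length

/-- The minimum release time of any platoon (the initial value of `t`). -/
noncomputable def minRelease (A B : List Platoon) : ℝ :=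
  WithTop.untopD 0 (((A ++ B).map Prod.fst).minimum)

/-- The platoons of the given lane appearing in a schedule sequence, in order. -/
def laneProj (b : Bool) (L : List (Bool × Platoon × ℝ)) : List Platoon :=
  (L.filter (fun e => e.1 == b)).map (fun e => e.2.1)

/-- A valid schedule for a Y merge, presented as a sequence of (lane, platoon,
crossing time) triples in crossing order: the platoons of each lane appear exactly
in their lane order, each platoon crosses no earlier than its release time, and
each platoon finishes crossing before the next one starts (platoons on different
lanes are incompatible, and platoons on the same lane may not pass each other). -/
def ValidSeq (A B : List Platoon) (L : List (Bool × Platoon × ℝ)) : Prop :=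
  laneProj false L = A ∧ laneProj true L = B ∧
  (∀ e ∈ L, e.2.1.1 ≤ e.2.2) ∧
  L.Chain' (fun e f => e.2.2 + e.2.1.2 ≤ f.2.2)

namespace YM

abbrev E := Bool × Platoon × ℝ

def sched (e f : E) : Prop := e.2.2 + e.2.1.2 ≤ f.2.2

lemma lp_nil (b : Bool) : laneProj b [] = [] := rfl

lemma lp_cons_same {e : E} {b : Bool} (h : e.1 = b) (L : List E) :
    laneProj b (e :: L) = e.2.1 :: laneProj b L := by
  simp [laneProj, List.filter_cons, h]

lemma lp_cons_other {e : E} {b : Bool} (h : e.1 ≠ b) (L : List E) :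
    laneProj b (e :: L) = laneProj b L := by
  simp [laneProj, List.filter_cons, h]

lemma lp_append (b : Bool) (L₁ L₂ : List E) :
    laneProj b (L₁ ++ L₂) = laneProj b L₁ ++ laneProj b L₂ := by
  simp [laneProj, List.filter_append]

lemma mem_lp {e : E} {L : List E} (he : e ∈ L) : e.2.1 ∈ laneProj e.1 L :=
  List.mem_map_of_mem (List.mem_filter.mpr ⟨he, by simp⟩)

lemma lp_nil_of {b : Bool} {P : List E} (h : ∀ e ∈ P, e.1 ≠ b) : laneProj b P = [] := by
  simp only [laneProj, List.map_eq_nil_iff, List.filter_eq_nil_iff]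
  intro e he
  simpa using h e he

lemma lp_all_of {b : Bool} {P : List E} (h : ∀ e ∈ P, e.1 = b) :
    laneProj b P = P.map (fun e => e.2.1) := by
  unfold laneProj
  congr 1
  apply List.filter_eq_self.mpr
  intro e he
  simp [h e he]

lemma pos_of_valid {A B : List Platoon} {L : List E} (hv : ValidSeq A B L)
    (hA : ∀ p ∈ A, 0 < p.2) (hB : ∀ p ∈ B, 0 < p.2) :
    ∀ e ∈ L, 0 < e.2.1.2 := by
  intro e he
  have hm := mem_lp he
  cases h1 : e.1 with
  | false => rw [h1, hv.1] at hm; exact hA _ hm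
  | true => rw [h1, hv.2.1] at hm; exact hB _ hm

/-- Chain propagation from the head. -/
lemma cp0 : ∀ (L : List E) (x : E), List.Chain' sched (x :: L) →
    (∀ e ∈ L, 0 < e.2.1.2) → ∀ g ∈ L, x.2.2 + x.2.1.2 ≤ g.2.2 := by
  intro L
  induction L with
  | nil => simp
  | cons y L ih =>
    intro x hc hpos g hg
    have hxy : sched x y := (List.isChain_cons.mp hc).1 y rfl
    rcases List.mem_cons.mp hg with rfl | hg'
    · exact hxy
    · have h2 := ih y ((List.isChain_cons.mp hc).2) (fun e he => hpos e (List.mem_cons_of_mem _ he)) g hg'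
      have hy : (0:ℝ) < y.2.1.2 := hpos y (List.mem_cons_self)
      unfold sched at hxy
      linarith

lemma chain_head_le : ∀ (P : List E) (f : E) (S : List E),
    List.Chain' sched (P ++ f :: S) → (∀ e ∈ P ++ f :: S, 0 < e.2.1.2) →
    ∀ e ∈ P, e.2.2 + e.2.1.2 ≤ f.2.2 := by
  intro P
  induction P with
  | nil => simp
  | cons x P ih =>
    intro f S hc hpos e he
    rcases List.mem_cons.mp he with rfl | he'
    · exact cp0 _ _ hc (fun g hg => hpos g (List.mem_cons_of_mem _ hg)) f
        (List.mem_append_right _ (List.mem_cons_self))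
    · exact ih f S ((List.isChain_cons.mp hc).2)
        (fun g hg => hpos g (List.mem_cons_of_mem _ hg)) e he'

def tlen (L : List E) : ℝ := (L.map fun e => e.2.1.2).sum

lemma tlen_nonneg {L : List E} (h : ∀ e ∈ L, 0 < e.2.1.2) : 0 ≤ tlen L := by
  induction L with
  | nil => simp [tlen]
  | cons x L ih =>
    have := h x (List.mem_cons_self)
    have h2 := ih (fun e he => h e (List.mem_cons_of_mem _ he))
    simp only [tlen, List.map_cons, List.sum_cons] at *
    linarith

lemma sum_le : ∀ (P : List E) (u : ℝ), List.Chain' sched P →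
    (∀ e ∈ P, 0 < e.2.1.2) → (∀ e ∈ P, e.2.2 + e.2.1.2 ≤ u) →
    ∀ hd ∈ P.head?, hd.2.2 + tlen P ≤ u := by
  intro P
  induction P with
  | nil => simp
  | cons x P ih =>
    intro u hc hpos hu hd hhd
    simp only [List.head?_cons, Option.mem_some_iff] at hhd
    subst hhd
    cases P with
    | nil =>
      have := hu x (List.mem_cons_self)
      simp only [tlen, List.map_cons, List.map_nil, List.sum_cons, List.sum_nil]
      linarith
    | cons y P' =>
      have hxy : sched x y := (List.isChain_cons.mp hc).1 y rfl
      have h2 := ih u ((List.isChain_cons.mp hc).2)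
        (fun e he => hpos e (List.mem_cons_of_mem _ he))
        (fun e he => hu e (List.mem_cons_of_mem _ he)) y rfl
      simp only [tlen, List.map_cons, List.sum_cons] at *
      unfold sched at hxy
      linarith

/-- Split off the first entry of lane `b`. -/
lemma split_first (b : Bool) : ∀ (L : List E) (x : Platoon) (A' : List Platoon),
    laneProj b L = x :: A' →
    ∃ P c S, L = P ++ (b, x, c) :: S ∧ ∀ e ∈ P, e.1 ≠ b := by
  intro L
  induction L with
  | nil => intro x A' h; simp [laneProj] at h
  | cons e L ih =>
    intro x A' h
    by_cases hb : e.1 = b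
    · rw [lp_cons_same hb] at h
      injection h with h1 h2
      refine ⟨[], e.2.2, L, ?_, by simp⟩
      rw [← hb, ← h1]
      rfl
    · rw [lp_cons_other hb] at h
      obtain ⟨P, c, S, hL, hP⟩ := ih x A' h
      exact ⟨e :: P, c, S, by rw [hL]; rfl, by
        intro f hf
        rcases List.mem_cons.mp hf with rfl | hf'
        · exact hb
        · exact hP f hf'⟩

end YM

namespace YM2
open YM

/-- Recompress a schedule segment to start no earlier than `s`. -/
def retime (s : ℝ) : List E → List E
  | [] => []
  | e :: P => (e.1, e.2.1, max s e.2.2) :: retime (max s e.2.2 + e.2.1.2) P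

lemma retime_lp (b : Bool) : ∀ (P : List E) (s : ℝ), laneProj b (retime s P) = laneProj b P := by
  intro P
  induction P with
  | nil => intro s; rfl
  | cons e P ih =>
    intro s
    by_cases hb : e.1 = b
    · rw [retime, lp_cons_same hb, lp_cons_same (show (e.1, e.2.1, max s e.2.2).1 = b from hb), ih]
    · rw [retime, lp_cons_other hb, lp_cons_other (show (e.1, e.2.1, max s e.2.2).1 ≠ b from hb), ih]

lemma retime_spec (d : ℝ) : ∀ (P : List E) (s : ℝ),
    (∀ e ∈ P, e.2.1.1 ≤ e.2.2 ∧ e.2.2 - e.2.1.1 ≤ d ∧ 0 < e.2.1.2) →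
    List.Chain' sched P →
    List.Chain' (fun p q => p.1 + p.2 ≤ q.1) (P.map (fun e => e.2.1)) →
    (∀ hd ∈ P.head?, s ≤ hd.2.1.1 + d) →
    List.Chain' sched (retime s P) ∧
    (∀ e ∈ retime s P, e.2.1.1 ≤ e.2.2 ∧ e.2.2 - e.2.1.1 ≤ d ∧ s ≤ e.2.2) ∧
    (∀ u, (∀ e ∈ P, e.2.2 + e.2.1.2 ≤ u) → s + tlen P ≤ u →
      ∀ e ∈ retime s P, e.2.2 + e.2.1.2 ≤ u) := by
  intro P
  induction P with
  | nil => intro s _ _ _ _; refine ⟨by simp [retime]; exact List.isChain_nil, by simp [retime], by simp [retime]⟩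
  | cons x P ih =>
    intro s hall hc hg hs
    have hx := hall x (List.mem_cons_self)
    have hxs : s ≤ x.2.1.1 + d := hs x rfl
    set s' := max s x.2.2 + x.2.1.2 with hs'def
    -- head? hypothesis for the tail
    have hs' : ∀ hd ∈ P.head?, s' ≤ hd.2.1.1 + d := by
      intro hd hhd
      have hmem : hd ∈ P := List.mem_of_mem_head? hhd
      have hgap : x.2.1.1 + x.2.1.2 ≤ hd.2.1.1 := by
        cases P with
        | nil => simp at hhd
        | cons y P' =>
          have hdy : y = hd := by simpa using hhd
          rw [← hdy]
          simpa using (List.isChain_cons.mp (by rw [List.map_cons] at hg; exact hg)).1 y.2.1 (by simp)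
      have h1 : max s x.2.2 ≤ x.2.1.1 + d := max_le hxs (by linarith [hx.2.1])
      simp only [hs'def]
      linarith
    have htail := ih s' (fun e he => hall e (List.mem_cons_of_mem _ he))
      ((List.isChain_cons.mp hc).2)
      (by
        have := hg
        rw [List.map_cons] at this
        exact (List.isChain_cons.mp this).2) hs'
    refine ⟨?_, ?_, ?_⟩
    · rw [retime]
      apply List.isChain_cons.mpr
      refine ⟨?_, htail.1⟩
      intro y hy
      have hy' : y ∈ retime s' P := List.mem_of_mem_head? hy
      have := (htail.2.1 y hy').2.2
      show (max s x.2.2) + x.2.1.2 ≤ y.2.2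
      exact this
    · rw [retime]
      intro e he
      rcases List.mem_cons.mp he with rfl | he'
      · refine ⟨le_trans hx.1 (le_max_right _ _), ?_, le_max_left _ _⟩
        show max s x.2.2 - x.2.1.1 ≤ d
        apply sub_le_iff_le_add.mpr
        apply max_le <;> linarith [hx.2.1]
      · have h1 := htail.2.1 e he'
        refine ⟨h1.1, h1.2.1, ?_⟩
        have : s ≤ s' := by
          have := hx.2.2
          have : s ≤ max s x.2.2 := le_max_left _ _
          simp only [hs'def]
          linarith [hx.2.2]
        linarith [h1.2.2]
    · intro u hu hsu
      rw [retime]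
      intro e he
      have hpos : ∀ e ∈ P, 0 < e.2.1.2 := fun e he => (hall e (List.mem_cons_of_mem _ he)).2.2
      have htl : 0 ≤ tlen P := tlen_nonneg hpos
      have htlen_cons : tlen (x :: P) = x.2.1.2 + tlen P := by
        simp [tlen]
      rcases List.mem_cons.mp he with rfl | he'
      · show max s x.2.2 + x.2.1.2 ≤ u
        have hux := hu x (List.mem_cons_self)
        rw [htlen_cons] at hsu
        rcases max_cases s x.2.2 with ⟨hm, _⟩ | ⟨hm, _⟩ <;> rw [hm] <;> linarith
      · apply (htail.2.2 u (fun e he => hu e (List.mem_cons_of_mem _ he)) ?_) e he'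
        -- s' + tlen P ≤ u
        rcases max_cases s x.2.2 with ⟨hm, _⟩ | ⟨hm, _⟩ <;> simp only [hs'def, hm]
        · rw [htlen_cons] at hsu; linarith
        · -- x.2.2 + x.2.1.2 + tlen P ≤ u
          cases P with
          | nil => simp only [tlen, List.map_nil, List.sum_nil, add_zero]
                   exact hu x (List.mem_cons_self)
          | cons y P' =>
            have hxy : sched x y := (List.isChain_cons.mp hc).1 y rfl
            have hy := sum_le (y :: P') u ((List.isChain_cons.mp hc).2) hpos
              (fun e he => hu e (List.mem_cons_of_mem _ he)) y rfl
            unfold sched at hxy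
            simp only [tlen, List.map_cons, List.sum_cons] at hy ⊢
            linarith

end YM2

namespace YM3
open YM YM2

lemma start_sum (P : List E) (c0 mt : ℝ) (hcP : List.Chain' sched P)
    (hpos : ∀ e ∈ P, 0 < e.2.1.2) (hfin : ∀ e ∈ P, e.2.2 + e.2.1.2 ≤ c0)
    (hhd : ∀ hd ∈ P.head?, mt ≤ hd.2.2) (hmt : mt ≤ c0) : mt + tlen P ≤ c0 := by
  cases P with
  | nil => simpa [tlen] using hmt
  | cons hd P' =>
    have h1 := sum_le (hd :: P') c0 hcP hpos hfin hd rfl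
    have h2 := hhd hd rfl
    linarith

lemma exchange (b : Bool) (r l r' l' t d : ℝ) (A B : List Platoon) (L : List E)
    (hb : laneProj b L = (r,l) :: A) (hb' : laneProj (!b) L = (r',l') :: B)
    (hrel : ∀ e ∈ L, e.2.1.1 ≤ e.2.2)
    (hchain : List.Chain' sched L)
    (hpos : ∀ e ∈ L, 0 < e.2.1.2)
    (hrgap : List.Chain' (fun p q => p.1 + p.2 ≤ q.1) ((r',l') :: B))
    (hT : ∀ e ∈ L, t ≤ e.2.2)
    (hD : ∀ e ∈ L, e.2.2 - e.2.1.1 ≤ d)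
    (hl : 0 < l) (hrr : r ≤ r')
    (hsd : max t r + l ≤ r' + d) :
    ∃ M : List E,
      laneProj b ((b,(r,l),max t r) :: M) = (r,l) :: A ∧
      laneProj (!b) ((b,(r,l),max t r) :: M) = (r',l') :: B ∧
      (∀ e ∈ (b,(r,l),max t r) :: M, e.2.1.1 ≤ e.2.2) ∧
      List.Chain' sched ((b,(r,l),max t r) :: M) ∧
      (∀ e ∈ (b,(r,l),max t r) :: M, t ≤ e.2.2) ∧
      (∀ e ∈ (b,(r,l),max t r) :: M, e.2.2 - e.2.1.1 ≤ d) := by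
  obtain ⟨P, c0, S, hLeq, hP⟩ := split_first b L (r,l) A hb
  subst hLeq
  have hbne : b ≠ !b := by cases b <;> simp
  have hP' : ∀ e ∈ P, e.1 = !b := by
    intro e he
    have := hP e he
    cases h1 : e.1 <;> cases b <;> simp_all
  have hpE : ((b,(r,l),c0) : E) ∈ P ++ (b,(r,l),c0) :: S :=
    List.mem_append_right _ (List.mem_cons_self)
  have hc0t : t ≤ c0 := hT _ hpE
  have hc0r : r ≤ c0 := hrel _ hpE
  have hc0d : c0 - r ≤ d := hD _ hpE
  have hmtr : max t r ≤ c0 := max_le hc0t hc0r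
  have hPnil : laneProj b P = [] := lp_nil_of hP
  have hPall : laneProj (!b) P = P.map (fun e => e.2.1) := lp_all_of hP'
  have hSb : laneProj b S = A := by
    rw [lp_append, hPnil, lp_cons_same (show ((b,(r,l),c0) : E).1 = b from rfl)] at hb
    simpa using hb
  have hSb' : P.map (fun e => e.2.1) ++ laneProj (!b) S = (r',l') :: B := by
    rw [lp_append, hPall, lp_cons_other (show ((b,(r,l),c0) : E).1 ≠ !b from hbne)] at hb'
    exact hb'
  obtain ⟨hcP, hcpS, hlink⟩ := List.isChain_append.mp hchain
  have hcS : List.Chain' sched S := (List.isChain_cons.mp hcpS).2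
  have hfinP : ∀ e ∈ P, e.2.2 + e.2.1.2 ≤ c0 :=
    chain_head_le P ((b,(r,l),c0)) S hchain hpos
  have hposP : ∀ e ∈ P, 0 < e.2.1.2 := fun e he => hpos e (List.mem_append_left _ he)
  have hPhead : ∀ hd ∈ P.head?, hd.2.1 = (r',l') := by
    intro hd hhd
    have hPe := List.eq_cons_of_mem_head? hhd
    have hcopy := hSb'
    rw [hPe, List.map_cons, List.cons_append] at hcopy
    simpa using congrArg List.head? hcopy
  set s := max t r + l with hsdef
  have hgapP : List.Chain' (fun p q => p.1 + p.2 ≤ q.1) (P.map (fun e => e.2.1)) :=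
    hrgap.prefix ⟨laneProj (!b) S, hSb'⟩
  have hallP : ∀ e ∈ P, e.2.1.1 ≤ e.2.2 ∧ e.2.2 - e.2.1.1 ≤ d ∧ 0 < e.2.1.2 := by
    intro e he
    have hm := List.mem_append_left ((b,(r,l),c0) :: S) he
    exact ⟨hrel e hm, hD e hm, hpos e hm⟩
  have hheadP : ∀ hd ∈ P.head?, s ≤ hd.2.1.1 + d := by
    intro hd hhd
    have := hPhead hd hhd
    rw [this]
    exact hsd
  obtain ⟨hrc, hrall, hrfin⟩ := retime_spec d P s hallP hcP hgapP hheadP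
  have hsS : ∀ y ∈ S.head?, c0 + l ≤ y.2.2 := by
    intro y hy
    exact (List.isChain_cons.mp hcpS).1 y hy
  have hmtP : ∀ hd ∈ P.head?, max t r ≤ hd.2.2 := by
    intro hd hhd
    have hm : hd ∈ P := List.mem_of_mem_head? hhd
    have hm' := List.mem_append_left ((b,(r,l),c0) :: S) hm
    have h1 : t ≤ hd.2.2 := hT _ hm'
    have h2 : r ≤ hd.2.2 := by
      have h3 := hrel _ hm'
      have h4 := hPhead hd hhd
      have : hd.2.1.1 = r' := by rw [h4]
      linarith [hrr, this ▸ h3]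
    exact max_le h1 h2
  have hkey : max t r + tlen P ≤ c0 :=
    start_sum P c0 (max t r) hcP hposP hfinP hmtP hmtr
  refine ⟨retime s P ++ S, ?_, ?_, ?_, ?_, ?_, ?_⟩
  · rw [lp_cons_same (show ((b,(r,l),max t r) : E).1 = b from rfl), lp_append, retime_lp, hPnil, hSb]
    rfl
  · rw [lp_cons_other (show ((b,(r,l),max t r) : E).1 ≠ !b from hbne), lp_append, retime_lp, hPall, hSb']
  · intro e he
    rcases List.mem_cons.mp he with rfl | he'
    · exact le_max_right t r
    · rcases List.mem_append.mp he' with h1 | h2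
      · exact (hrall e h1).1
      · exact hrel e (List.mem_append_right _ (List.mem_cons_of_mem _ h2))
  · apply List.isChain_cons.mpr
    constructor
    · intro y hy
      show s ≤ y.2.2
      cases hR : retime s P with
      | nil =>
        rw [hR, List.nil_append] at hy
        have := hsS y hy
        linarith
      | cons z R =>
        rw [hR] at hy
        have hyz : z = y := by
          simp only [List.cons_append, List.head?_cons, Option.mem_some_iff] at hy
          exact hy
        rw [← hyz]
        exact (hrall z (hR ▸ List.mem_cons_self)).2.2
    · apply List.isChain_append.mpr
      refine ⟨hrc, hcS, ?_⟩
      intro x hx y hy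
      have hxm : x ∈ retime s P := List.mem_of_mem_getLast? hx
      have huy : c0 + l ≤ y.2.2 := hsS y hy
      show x.2.2 + x.2.1.2 ≤ y.2.2
      apply hrfin y.2.2 ?_ ?_ x hxm
      · intro e he
        have := hfinP e he
        linarith
      · rw [hsdef]
        linarith
  · intro e he
    rcases List.mem_cons.mp he with rfl | he'
    · exact le_max_left t r
    · rcases List.mem_append.mp he' with h1 | h2
      · have := (hrall e h1).2.2
        have h3 : t ≤ s := by rw [hsdef]; have := le_max_left t r; linarith
        linarith
      · exact hT e (List.mem_append_right _ (List.mem_cons_of_mem _ h2))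
  · intro e he
    rcases List.mem_cons.mp he with rfl | he'
    · show max t r - r ≤ d
      linarith
    · rcases List.mem_append.mp he' with h1 | h2
      · exact (hrall e h1).2.1
      · exact hD e (List.mem_append_right _ (List.mem_cons_of_mem _ h2))

end YM3

namespace YM4
open YM YM2 YM3

lemma greedy_fromT (d : ℝ) : ∀ (n : ℕ) (A B : List Platoon) (t : ℝ),
    A.length + B.length ≤ n → (∀ p ∈ A, 0 < p.2) → (∀ p ∈ B, 0 < p.2) →
    ∀ e ∈ greedy d t A B, t ≤ e.2.2 := by
  intro n
  induction n with
  | zero =>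
    intro A B t hn hA hB
    have hA0 : A = [] := List.length_eq_zero_iff.mp (by omega)
    have hB0 : B = [] := List.length_eq_zero_iff.mp (by omega)
    subst hA0; subst hB0
    rw [greedy]
    simp
  | succ n ih =>
    intro A B t hn hA hB
    rcases A with _ | ⟨⟨r, l⟩, A⟩ <;> rcases B with _ | ⟨⟨r', l'⟩, B⟩
    · rw [greedy]; simp
    · rw [greedy]
      intro e he
      rcases List.mem_cons.mp he with rfl | he'
      · exact le_max_left t r'
      · have hl : 0 < l' := hB (r', l') (List.mem_cons_self)
        have h2 := ih [] B (max t r' + l') (by simp only [List.length_cons, List.length_nil] at hn ⊢; omega)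
          hA (fun p hp => hB p (List.mem_cons_of_mem _ hp)) e he'
        have h3 : t ≤ max t r' := le_max_left _ _
        linarith
    · rw [greedy]
      intro e he
      rcases List.mem_cons.mp he with rfl | he'
      · exact le_max_left t r
      · have hl : 0 < l := hA (r, l) (List.mem_cons_self)
        have h2 := ih A [] (max t r + l) (by simp only [List.length_cons, List.length_nil] at hn ⊢; omega)
          (fun p hp => hA p (List.mem_cons_of_mem _ hp)) hB e he'
        have h3 : t ≤ max t r := le_max_left _ _
        linarith
    · rw [greedy]
      have hl : 0 < l := hA (r, l) (List.mem_cons_self)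
      have hl' : 0 < l' := hB (r', l') (List.mem_cons_self)
      have hA' := fun p hp => hA p (List.mem_cons_of_mem ((r,l) : Platoon) hp)
      have hB' := fun p hp => hB p (List.mem_cons_of_mem ((r',l') : Platoon) hp)
      simp only [List.length_cons] at hn
      split_ifs with h1 h2 h3 <;> intro e he <;>
        rcases List.mem_cons.mp he with rfl | he'
      · exact le_max_left t r
      · have h2 := ih A ((r',l')::B) (max t r + l) (by simp only [List.length_cons]; omega)
          hA' hB e he'
        have h3 : t ≤ max t r := le_max_left _ _
        linarith
      · exact le_max_left t r'
      · have h2 := ih ((r,l)::A) B (max t r' + l') (by simp only [List.length_cons]; omega)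
          hA hB' e he'
        have h3 : t ≤ max t r' := le_max_left _ _
        linarith
      · exact le_max_left t r'
      · have h2 := ih ((r,l)::A) B (max t r' + l') (by simp only [List.length_cons]; omega)
          hA hB' e he'
        have h3 : t ≤ max t r' := le_max_left _ _
        linarith
      · exact le_max_left t r
      · have h2 := ih A ((r',l')::B) (max t r + l) (by simp only [List.length_cons]; omega)
          hA' hB e he'
        have h3 : t ≤ max t r := le_max_left _ _
        linarith

lemma valid_cons_false (p : Platoon) (c s : ℝ) (A' B' : List Platoon) (G : List E)
    (hvs : ValidSeq A' B' G) (hfrom : ∀ e ∈ G, s ≤ e.2.2) (hs : c + p.2 ≤ s) (hrel : p.1 ≤ c) :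
    ValidSeq (p :: A') B' ((false, p, c) :: G) := by
  obtain ⟨v1, v2, v3, v4⟩ := hvs
  refine ⟨?_, ?_, ?_, ?_⟩
  · rw [lp_cons_same (show ((false, p, c) : E).1 = false from rfl), v1]
  · rw [lp_cons_other (show ((false, p, c) : E).1 ≠ true by simp), v2]
  · intro e he
    rcases List.mem_cons.mp he with rfl | he'
    · exact hrel
    · exact v3 e he'
  · refine List.isChain_cons.mpr ⟨?_, v4⟩
    intro y hy
    have := hfrom y (List.mem_of_mem_head? hy)
    show c + p.2 ≤ y.2.2
    linarith

lemma valid_cons_true (p : Platoon) (c s : ℝ) (A' B' : List Platoon) (G : List E)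
    (hvs : ValidSeq A' B' G) (hfrom : ∀ e ∈ G, s ≤ e.2.2) (hs : c + p.2 ≤ s) (hrel : p.1 ≤ c) :
    ValidSeq A' (p :: B') ((true, p, c) :: G) := by
  obtain ⟨v1, v2, v3, v4⟩ := hvs
  refine ⟨?_, ?_, ?_, ?_⟩
  · rw [lp_cons_other (show ((true, p, c) : E).1 ≠ false by simp), v1]
  · rw [lp_cons_same (show ((true, p, c) : E).1 = true from rfl), v2]
  · intro e he
    rcases List.mem_cons.mp he with rfl | he'
    · exact hrel
    · exact v3 e he'
  · refine List.isChain_cons.mpr ⟨?_, v4⟩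
    intro y hy
    have := hfrom y (List.mem_of_mem_head? hy)
    show c + p.2 ≤ y.2.2
    linarith

lemma greedy_valid (d : ℝ) : ∀ (n : ℕ) (A B : List Platoon) (t : ℝ),
    A.length + B.length ≤ n → (∀ p ∈ A, 0 < p.2) → (∀ p ∈ B, 0 < p.2) →
    ValidSeq A B (greedy d t A B) := by
  intro n
  induction n with
  | zero =>
    intro A B t hn hA hB
    have hA0 : A = [] := List.length_eq_zero_iff.mp (by omega)
    have hB0 : B = [] := List.length_eq_zero_iff.mp (by omega)
    subst hA0; subst hB0
    rw [greedy]
    exact ⟨rfl, rfl, by simp, List.isChain_nil⟩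
  | succ n ih =>
    intro A B t hn hA hB
    rcases A with _ | ⟨⟨r, l⟩, A⟩ <;> rcases B with _ | ⟨⟨r', l'⟩, B⟩
    · rw [greedy]
      exact ⟨rfl, rfl, by simp, List.isChain_nil⟩
    · rw [greedy]
      have hB' := fun p hp => hB p (List.mem_cons_of_mem ((r',l') : Platoon) hp)
      have hlen : ([] : List Platoon).length + B.length ≤ n := by
        simp only [List.length_cons, List.length_nil] at hn ⊢; omega
      exact valid_cons_true (r',l') (max t r') (max t r' + l') [] B _
        (ih [] B (max t r' + l') hlen hA hB')
        (greedy_fromT d n [] B (max t r' + l') hlen hA hB') le_rfl (le_max_right _ _)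
    · rw [greedy]
      have hA' := fun p hp => hA p (List.mem_cons_of_mem ((r,l) : Platoon) hp)
      have hlen : A.length + ([] : List Platoon).length ≤ n := by
        simp only [List.length_cons, List.length_nil] at hn ⊢; omega
      exact valid_cons_false (r,l) (max t r) (max t r + l) A [] _
        (ih A [] (max t r + l) hlen hA' hB)
        (greedy_fromT d n A [] (max t r + l) hlen hA' hB) le_rfl (le_max_right _ _)
    · rw [greedy]
      have hA' := fun p hp => hA p (List.mem_cons_of_mem ((r,l) : Platoon) hp)
      have hB' := fun p hp => hB p (List.mem_cons_of_mem ((r',l') : Platoon) hp)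
      simp only [List.length_cons] at hn
      have hlen1 : A.length + ((r',l')::B).length ≤ n := by
        simp only [List.length_cons]; omega
      have hlen2 : ((r,l)::A).length + B.length ≤ n := by
        simp only [List.length_cons]; omega
      split_ifs with h1 h2 h3
      · exact valid_cons_false (r,l) (max t r) (max t r + l) A ((r',l')::B) _
          (ih A ((r',l')::B) (max t r + l) hlen1 hA' hB)
          (greedy_fromT d n A ((r',l')::B) (max t r + l) hlen1 hA' hB) le_rfl (le_max_right _ _)
      · exact valid_cons_true (r',l') (max t r') (max t r' + l') ((r,l)::A) B _
          (ih ((r,l)::A) B (max t r' + l') hlen2 hA hB')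
          (greedy_fromT d n ((r,l)::A) B (max t r' + l') hlen2 hA hB') le_rfl (le_max_right _ _)
      · exact valid_cons_true (r',l') (max t r') (max t r' + l') ((r,l)::A) B _
          (ih ((r,l)::A) B (max t r' + l') hlen2 hA hB')
          (greedy_fromT d n ((r,l)::A) B (max t r' + l') hlen2 hA hB') le_rfl (le_max_right _ _)
      · exact valid_cons_false (r,l) (max t r) (max t r + l) A ((r',l')::B) _
          (ih A ((r',l')::B) (max t r + l) hlen1 hA' hB)
          (greedy_fromT d n A ((r',l')::B) (max t r + l) hlen1 hA' hB) le_rfl (le_max_right _ _)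

end YM4

namespace YM5
open YM YM2 YM3 YM4

/-- If scheduling the lane-`b` head first would overly delay the other lane's head,
then any good schedule must start with the other lane's head. -/
lemma head_forced (b : Bool) (x y : Platoon) (A' B' : List Platoon) (L : List E) (t d : ℝ)
    (hbx : laneProj b L = x :: A') (hby : laneProj (!b) L = y :: B')
    (hrel : ∀ e ∈ L, e.2.1.1 ≤ e.2.2) (hchain : List.Chain' sched L)
    (hpos : ∀ e ∈ L, 0 < e.2.1.2)
    (hT : ∀ e ∈ L, t ≤ e.2.2) (hD : ∀ e ∈ L, e.2.2 - e.2.1.1 ≤ d)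
    (hbig : y.1 + d < max t x.1 + x.2) :
    ∃ c S, L = (!b, y, c) :: S := by
  obtain ⟨P, c, S, hLeq, hP⟩ := split_first (!b) L y B' hby
  cases P with
  | nil => exact ⟨c, S, by simpa using hLeq⟩
  | cons hd P' =>
    exfalso
    have hhdb : hd.1 = b := by
      have := hP hd (List.mem_cons_self)
      cases h1 : hd.1 <;> cases b <;> simp_all
    have hhdx : hd.2.1 = x := by
      have hcopy := hbx
      rw [hLeq, List.cons_append, lp_cons_same hhdb] at hcopy
      simpa using congrArg List.head? hcopy
    have hfin : hd.2.2 + hd.2.1.2 ≤ c := by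
      have := chain_head_le (hd :: P') (!b, y, c) S (hLeq ▸ hchain) (hLeq ▸ hpos) hd
        (List.mem_cons_self)
      exact this
    have hdm : hd ∈ L := by rw [hLeq]; exact List.mem_append_left _ (List.mem_cons_self)
    have hym : ((!b, y, c) : E) ∈ L := by
      rw [hLeq]; exact List.mem_append_right _ (List.mem_cons_self)
    have h1 : t ≤ hd.2.2 := hT hd hdm
    have h2 : x.1 ≤ hd.2.2 := by have := hrel hd hdm; rwa [hhdx] at this
    have h3 : c - y.1 ≤ d := hD _ hym
    have h4 : max t x.1 ≤ hd.2.2 := max_le h1 h2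
    have h5 : hd.2.1.2 = x.2 := by rw [hhdx]
    linarith [hfin, h5 ▸ hfin]

lemma greedy_le (d : ℝ) : ∀ (n : ℕ) (A B : List Platoon) (t : ℝ),
    A.length + B.length ≤ n → LaneOK A → LaneOK B →
    (∃ L, ValidSeq A B L ∧ (∀ e ∈ L, t ≤ e.2.2) ∧ (∀ e ∈ L, e.2.2 - e.2.1.1 ≤ d)) →
    ∀ e ∈ greedy d t A B, e.2.2 - e.2.1.1 ≤ d := by
  intro n
  induction n with
  | zero =>
    intro A B t hn hA hB _
    have hA0 : A = [] := List.length_eq_zero_iff.mp (by omega)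
    have hB0 : B = [] := List.length_eq_zero_iff.mp (by omega)
    subst hA0; subst hB0
    rw [greedy]; simp
  | succ n ih =>
    intro A B t hn hA hB hex
    obtain ⟨L, ⟨hbf, hbt, hvrel, hvchain⟩, hT, hD⟩ := hex
    have hposL : ∀ e ∈ L, 0 < e.2.1.2 := pos_of_valid ⟨hbf, hbt, hvrel, hvchain⟩ hA.1 hB.1
    rcases A with _ | ⟨⟨r, l⟩, A⟩ <;> rcases B with _ | ⟨⟨r', l'⟩, B⟩
    · rw [greedy]; simp
    · -- lane false empty
      obtain ⟨P, c, S, hLeq, hP⟩ := split_first true L (r',l') B hbt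
      have hPnil : P = [] := by
        rcases P with _ | ⟨hd, P'⟩
        · rfl
        · exfalso
          have hhdb : hd.1 = false := by
            have := hP hd (List.mem_cons_self)
            revert this
            cases hd.1 <;> simp
          have : hd.2.1 ∈ laneProj false L := by
            have := mem_lp (show hd ∈ L by
              rw [hLeq]; exact List.mem_append_left _ (List.mem_cons_self))
            rwa [hhdb] at this
          rw [hbf] at this
          simp at this
      subst hPnil
      simp only [List.nil_append] at hLeq
      subst hLeq
      have hcm : ((true, (r',l'), c) : E) ∈ (true, (r',l'), c) :: S := List.mem_cons_self
      have h1 : t ≤ c := hT _ hcm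
      have h2 : r' ≤ c := hvrel _ hcm
      have h3 : c - r' ≤ d := hD _ hcm
      rw [greedy]
      intro e he
      rcases List.mem_cons.mp he with rfl | he'
      · show max t r' - r' ≤ d
        have := max_le h1 h2
        linarith
      · refine ih [] B (max t r' + l')
          (by simp only [List.length_cons, List.length_nil] at hn ⊢; omega)
          hA ⟨fun p hp => hB.1 p (List.mem_cons_of_mem _ hp), hB.2.tail⟩ ⟨S, ⟨?_, ?_, ?_, ?_⟩, ?_, ?_⟩ e he'
        · rw [lp_cons_other (show ((true,(r',l'),c) : E).1 ≠ false by simp)] at hbf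
          exact hbf
        · rw [lp_cons_same (show ((true,(r',l'),c) : E).1 = true from rfl)] at hbt
          simpa using hbt
        · exact fun f hf => hvrel f (List.mem_cons_of_mem _ hf)
        · exact (List.isChain_cons.mp hvchain).2
        · intro f hf
          have := cp0 S ((true,(r',l'),c)) hvchain
            (fun g hg => hposL g (List.mem_cons_of_mem _ hg)) f hf
          have h4 : max t r' ≤ c := max_le h1 h2
          show max t r' + l' ≤ f.2.2
          simp only at this
          linarith
        · exact fun f hf => hD f (List.mem_cons_of_mem _ hf)
    · -- lane true empty
      obtain ⟨P, c, S, hLeq, hP⟩ := split_first false L (r,l) A hbf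
      have hPnil : P = [] := by
        rcases P with _ | ⟨hd, P'⟩
        · rfl
        · exfalso
          have hhdb : hd.1 = true := by
            have := hP hd (List.mem_cons_self)
            revert this
            cases hd.1 <;> simp
          have : hd.2.1 ∈ laneProj true L := by
            have := mem_lp (show hd ∈ L by
              rw [hLeq]; exact List.mem_append_left _ (List.mem_cons_self))
            rwa [hhdb] at this
          rw [hbt] at this
          simp at this
      subst hPnil
      simp only [List.nil_append] at hLeq
      subst hLeq
      have hcm : ((false, (r,l), c) : E) ∈ (false, (r,l), c) :: S := List.mem_cons_self
      have h1 : t ≤ c := hT _ hcm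
      have h2 : r ≤ c := hvrel _ hcm
      have h3 : c - r ≤ d := hD _ hcm
      rw [greedy]
      intro e he
      rcases List.mem_cons.mp he with rfl | he'
      · show max t r - r ≤ d
        have := max_le h1 h2
        linarith
      · refine ih A [] (max t r + l)
          (by simp only [List.length_cons, List.length_nil] at hn ⊢; omega)
          ⟨fun p hp => hA.1 p (List.mem_cons_of_mem _ hp), hA.2.tail⟩ hB ⟨S, ⟨?_, ?_, ?_, ?_⟩, ?_, ?_⟩ e he'
        · rw [lp_cons_same (show ((false,(r,l),c) : E).1 = false from rfl)] at hbf
          simpa using hbf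
        · rw [lp_cons_other (show ((false,(r,l),c) : E).1 ≠ true by simp)] at hbt
          exact hbt
        · exact fun f hf => hvrel f (List.mem_cons_of_mem _ hf)
        · exact (List.isChain_cons.mp hvchain).2
        · intro f hf
          have := cp0 S ((false,(r,l),c)) hvchain
            (fun g hg => hposL g (List.mem_cons_of_mem _ hg)) f hf
          have h4 : max t r ≤ c := max_le h1 h2
          show max t r + l ≤ f.2.2
          simp only at this
          linarith
        · exact fun f hf => hD f (List.mem_cons_of_mem _ hf)
    · -- both lanes nonempty
      have hA' : LaneOK A := ⟨fun p hp => hA.1 p (List.mem_cons_of_mem _ hp), hA.2.tail⟩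
      have hB' : LaneOK B := ⟨fun p hp => hB.1 p (List.mem_cons_of_mem _ hp), hB.2.tail⟩
      have hlpos : 0 < l := hA.1 (r,l) (List.mem_cons_self)
      have hlpos' : 0 < l' := hB.1 (r',l') (List.mem_cons_self)
      simp only [List.length_cons] at hn
      have hlen1 : A.length + ((r',l')::B).length ≤ n := by simp only [List.length_cons]; omega
      have hlen2 : ((r,l)::A).length + B.length ≤ n := by simp only [List.length_cons]; omega
      rw [greedy]
      split_ifs with h1 h2 h3
      · -- schedule (r,l) first; exchange argument
        obtain ⟨M, hm1, hm2, hm3, hm4, hm5, hm6⟩ :=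
          exchange false r l r' l' t d A B L hbf (by simpa using hbt) hvrel hvchain hposL
            hB.2 hT hD hlpos h1 (by linarith)
        simp only [Bool.not_false] at hm2
        intro e he
        rcases List.mem_cons.mp he with rfl | he'
        · exact hm6 _ (List.mem_cons_self)
        · refine ih A ((r',l')::B) (max t r + l) hlen1 hA' hB ⟨M, ⟨?_, ?_, ?_, ?_⟩, ?_, ?_⟩ e he'
          · rw [lp_cons_same (show ((false,(r,l),max t r) : E).1 = false from rfl)] at hm1
            simpa using hm1
          · rw [lp_cons_other (show ((false,(r,l),max t r) : E).1 ≠ true by simp)] at hm2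
            simpa using hm2
          · exact fun f hf => hm3 f (List.mem_cons_of_mem _ hf)
          · exact (List.isChain_cons.mp hm4).2
          · intro f hf
            have hposM : ∀ g ∈ M, 0 < g.2.1.2 := by
              intro g hg
              refine pos_of_valid (A := A) (B := (r',l')::B) ⟨?_, ?_, ?_, ?_⟩ hA'.1 hB.1 g hg
              · rw [lp_cons_same (show ((false,(r,l),max t r) : E).1 = false from rfl)] at hm1
                simpa using hm1
              · rw [lp_cons_other (show ((false,(r,l),max t r) : E).1 ≠ true by simp)] at hm2
                simpa using hm2
              · exact fun f hf => hm3 f (List.mem_cons_of_mem _ hf)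
              · exact (List.isChain_cons.mp hm4).2
            have := cp0 M ((false,(r,l),max t r)) hm4 hposM f hf
            exact this
          · exact fun f hf => hm6 f (List.mem_cons_of_mem _ hf)
      · -- must schedule (r',l') first
        obtain ⟨c, S, hLeq⟩ := head_forced false (r,l) (r',l') A B L t d hbf
          (by simpa using hbt) hvrel hvchain hposL hT hD (by push_neg at h2; linarith)
        rw [show (!false) = true from rfl] at hLeq
        subst hLeq
        have hcm : ((true, (r',l'), c) : E) ∈ (true, (r',l'), c) :: S := List.mem_cons_self
        have hh1 : t ≤ c := hT _ hcm
        have hh2 : r' ≤ c := hvrel _ hcm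
        have hh3 : c - r' ≤ d := hD _ hcm
        intro e he
        rcases List.mem_cons.mp he with rfl | he'
        · show max t r' - r' ≤ d
          have := max_le hh1 hh2
          linarith
        · refine ih ((r,l)::A) B (max t r' + l') hlen2 hA hB' ⟨S, ⟨?_, ?_, ?_, ?_⟩, ?_, ?_⟩ e he'
          · rw [lp_cons_other (show ((true,(r',l'),c) : E).1 ≠ false by simp)] at hbf
            exact hbf
          · rw [lp_cons_same (show ((true,(r',l'),c) : E).1 = true from rfl)] at hbt
            simpa using hbt
          · exact fun f hf => hvrel f (List.mem_cons_of_mem _ hf)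
          · exact (List.isChain_cons.mp hvchain).2
          · intro f hf
            have := cp0 S ((true,(r',l'),c)) hvchain
              (fun g hg => hposL g (List.mem_cons_of_mem _ hg)) f hf
            have h4 : max t r' ≤ c := max_le hh1 hh2
            show max t r' + l' ≤ f.2.2
            simp only at this
            linarith
          · exact fun f hf => hD f (List.mem_cons_of_mem _ hf)
      · -- r' < r, schedule (r',l') first; exchange argument on lane true
        obtain ⟨M, hm1, hm2, hm3, hm4, hm5, hm6⟩ :=
          exchange true r' l' r l t d B A L hbt (by simpa using hbf) hvrel hvchain hposL
            hA.2 hT hD hlpos' (le_of_lt (not_le.mp h1)) (by linarith)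
        simp only [Bool.not_true] at hm2
        intro e he
        rcases List.mem_cons.mp he with rfl | he'
        · exact hm6 _ (List.mem_cons_self)
        · refine ih ((r,l)::A) B (max t r' + l') hlen2 hA hB' ⟨M, ⟨?_, ?_, ?_, ?_⟩, ?_, ?_⟩ e he'
          · rw [lp_cons_other (show ((true,(r',l'),max t r') : E).1 ≠ false by simp)] at hm2
            simpa using hm2
          · rw [lp_cons_same (show ((true,(r',l'),max t r') : E).1 = true from rfl)] at hm1
            simpa using hm1
          · exact fun f hf => hm3 f (List.mem_cons_of_mem _ hf)
          · exact (List.isChain_cons.mp hm4).2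
          · intro f hf
            have hposM : ∀ g ∈ M, 0 < g.2.1.2 := by
              intro g hg
              refine pos_of_valid (A := (r,l)::A) (B := B) ⟨?_, ?_, ?_, ?_⟩ hA.1 hB'.1 g hg
              · rw [lp_cons_other (show ((true,(r',l'),max t r') : E).1 ≠ false by simp)] at hm2
                simpa using hm2
              · rw [lp_cons_same (show ((true,(r',l'),max t r') : E).1 = true from rfl)] at hm1
                simpa using hm1
              · exact fun f hf => hm3 f (List.mem_cons_of_mem _ hf)
              · exact (List.isChain_cons.mp hm4).2
            have := cp0 M ((true,(r',l'),max t r')) hm4 hposM f hf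
            exact this
          · exact fun f hf => hm6 f (List.mem_cons_of_mem _ hf)
      · -- r' < r, must schedule (r,l) first
        obtain ⟨c, S, hLeq⟩ := head_forced true (r',l') (r,l) B A L t d hbt
          (by simpa using hbf) hvrel hvchain hposL hT hD (by push_neg at h3; linarith)
        rw [show (!true) = false from rfl] at hLeq
        subst hLeq
        have hcm : ((false, (r,l), c) : E) ∈ (false, (r,l), c) :: S := List.mem_cons_self
        have hh1 : t ≤ c := hT _ hcm
        have hh2 : r ≤ c := hvrel _ hcm
        have hh3 : c - r ≤ d := hD _ hcm
        intro e he
        rcases List.mem_cons.mp he with rfl | he'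
        · show max t r - r ≤ d
          have := max_le hh1 hh2
          linarith
        · refine ih A ((r',l')::B) (max t r + l) hlen1 hA' hB ⟨S, ⟨?_, ?_, ?_, ?_⟩, ?_, ?_⟩ e he'
          · rw [lp_cons_same (show ((false,(r,l),c) : E).1 = false from rfl)] at hbf
            simpa using hbf
          · rw [lp_cons_other (show ((false,(r,l),c) : E).1 ≠ true by simp)] at hbt
            exact hbt
          · exact fun f hf => hvrel f (List.mem_cons_of_mem _ hf)
          · exact (List.isChain_cons.mp hvchain).2
          · intro f hf
            have := cp0 S ((false,(r,l),c)) hvchain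
              (fun g hg => hposL g (List.mem_cons_of_mem _ hg)) f hf
            have h4 : max t r ≤ c := max_le hh1 hh2
            show max t r + l ≤ f.2.2
            simp only at this
            linarith
          · exact fun f hf => hD f (List.mem_cons_of_mem _ hf)

end YM5

namespace YM6
open YM YM2 YM3 YM4 YM5

lemma fromT_min {A B : List Platoon} {L : List (Bool × Platoon × ℝ)}
    (hv : ValidSeq A B L) : ∀ e ∈ L, minRelease A B ≤ e.2.2 := by
  intro e he
  have hrel : e.2.1.1 ≤ e.2.2 := hv.2.2.1 e he
  have hmem : e.2.1 ∈ A ++ B := by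
    have hm := mem_lp he
    cases h1 : e.1 with
    | false => rw [h1, hv.1] at hm; exact List.mem_append_left _ hm
    | true => rw [h1, hv.2.1] at hm; exact List.mem_append_right _ hm
  have hmem' : e.2.1.1 ∈ (A ++ B).map Prod.fst := List.mem_map_of_mem hmem
  have h2 := List.minimum_le_of_mem' hmem'
  cases hmin : ((A ++ B).map Prod.fst).minimum with
  | top =>
    rw [hmin] at h2
    exact absurd (top_le_iff.mp h2) (by simp)
  | coe m =>
    rw [hmin] at h2
    have h3 : m ≤ e.2.1.1 := WithTop.coe_le_coe.mp h2
    have h4 : minRelease A B = m := by rw [minRelease, hmin]; rfl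
    rw [h4]
    linarith

theorem stmt3' (A B : List Platoon) (hA : LaneOK A) (hB : LaneOK B) (d : ℝ) :
    ValidSeq A B (greedy d (minRelease A B) A B) ∧
    ((∀ e ∈ greedy d (minRelease A B) A B, e.2.2 - e.2.1.1 ≤ d) ↔
      ∃ L, ValidSeq A B L ∧ ∀ e ∈ L, e.2.2 - e.2.1.1 ≤ d) := by
  have hvalid := greedy_valid d (A.length + B.length) A B (minRelease A B) le_rfl hA.1 hB.1
  refine ⟨hvalid, ⟨fun h => ⟨greedy d (minRelease A B) A B, hvalid, h⟩, ?_⟩⟩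
  rintro ⟨L, hv, hd⟩
  exact greedy_le d (A.length + B.length) A B (minRelease A B) le_rfl hA hB
    ⟨L, hv, fromT_min hv, hd⟩

end YM6

/-- The greedy schedule is always valid, and it has delay at most `d` if and only
if some valid schedule with delay at most `d` exists. -/
theorem stmt3 (A B : List Platoon) (hA : LaneOK A) (hB : LaneOK B) (d : ℝ) :
    ValidSeq A B (greedy d (minRelease A B) A B) ∧
    ((∀ e ∈ greedy d (minRelease A B) A B, e.2.2 - e.2.1.1 ≤ d) ↔
      ∃ L, ValidSeq A B L ∧ ∀ e ∈ L, e.2.2 - e.2.1.1 ≤ d) :=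
  YM6.stmt3' A B hA hB d
end

section
/- Exchange step for the Y-merge greedy algorithm: let d be a real delay bound and let S be a left-justified valid schedule with delay at most d for a Y-merge instance. Suppose that for some set P of platoons forming, on each lane, an initial segment in release order, all platoons of P cross before all others in S and finish by time t; let p_i and p_j be the first remaining platoons on the two lanes, with release times r_i ≤ r_j and lengths ℓ_i, ℓ_j; suppose max(t, r_i) + ℓ_i − r_j ≤ d but in S platoon p_j crosses before p_i. Then the left-justified schedule S' whose crossing order is obtained from that of S by moving p_i to cross immediately after the platoons of P (keeping all other platoons in the same relative order as in S) is a valid schedule with delay at most d. -/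
/-- Left-justified scheduling of a crossing order, where the previous platoon
finished at time `t`: each platoon crosses at the maximum of its release time and
the previous platoon's crossing time plus length. -/
noncomputable def leftJust : ℝ → List (Bool × Platoon) → List (Bool × Platoon × ℝ)
  | _, [] => []
  | t, (b, p) :: L => (b, p, max t p.1) :: leftJust (max t p.1 + p.2) L

/-- The left-justified schedule for a crossing order: the first platoon crosses at
its release time, and each subsequent platoon crosses at the maximum of its release
time and the previous platoon's crossing time plus length. -/
noncomputable def leftJustStart : List (Bool × Platoon) → List (Bool × Platoon × ℝ)
  | [] => []
  | (b, p) :: L => (b, p, p.1) :: leftJust (p.1 + p.2) L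

noncomputable def finT : ℝ → List (Bool × Platoon) → ℝ
  | t, [] => t
  | t, (_, p) :: L => finT (max t p.1 + p.2) L

lemma leftJust_append (K L : List (Bool × Platoon)) : ∀ t : ℝ,
    leftJust t (K ++ L) = leftJust t K ++ leftJust (finT t K) L := by
  induction K with
  | nil => intro t; simp [leftJust, finT]
  | cons x K ih => intro t; obtain ⟨b, p⟩ := x; simp [leftJust, finT, ih]

lemma leftJust_cons (t r l : ℝ) (b : Bool) (L : List (Bool × Platoon)) :
    leftJust t ((b, (r, l)) :: L) = (b, (r, l), max t r) :: leftJust (max t r + l) L := by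
  simp [leftJust]

lemma leftJust_length : ∀ (L : List (Bool × Platoon)) (t : ℝ),
    (leftJust t L).length = L.length := by
  intro L
  induction L with
  | nil => intro t; simp [leftJust]
  | cons x L ih => intro t; obtain ⟨b, p⟩ := x; simp [leftJust, ih]

lemma leftJust_rel : ∀ (L : List (Bool × Platoon)) (t : ℝ),
    ∀ e ∈ leftJust t L, e.2.1.1 ≤ e.2.2 := by
  intro L
  induction L with
  | nil => intro t e he; simp [leftJust] at he
  | cons x L ih =>
    intro t e he
    obtain ⟨b, p⟩ := x
    rw [leftJust, List.mem_cons] at he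
    rcases he with h | h
    · subst h; exact le_max_right _ _
    · exact ih _ e h

lemma leftJust_head_ge : ∀ (L : List (Bool × Platoon)) (t : ℝ),
    ∀ e ∈ (leftJust t L).head?, t ≤ e.2.2 := by
  intro L t e he
  cases L with
  | nil => simp [leftJust] at he
  | cons x L =>
    obtain ⟨b, p⟩ := x
    simp [leftJust] at he
    subst he
    exact le_max_left _ _

lemma leftJust_chain : ∀ (L : List (Bool × Platoon)) (t : ℝ),
    (leftJust t L).Chain' (fun e f => e.2.2 + e.2.1.2 ≤ f.2.2) := by
  intro L
  induction L with
  | nil => intro t; simp [leftJust]; exact List.isChain_nil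
  | cons x L ih =>
    intro t
    obtain ⟨b, p⟩ := x
    rw [leftJust]
    refine List.isChain_cons.mpr ⟨?_, ih _⟩
    intro f hf
    exact leftJust_head_ge L (max t p.1 + p.2) f hf

lemma leftJust_ge : ∀ (L : List (Bool × Platoon)) (t : ℝ),
    (∀ x ∈ L, 0 ≤ x.2.2) → ∀ e ∈ leftJust t L, t ≤ e.2.2 := by
  intro L
  induction L with
  | nil => intro t _ e he; simp [leftJust] at he
  | cons x L ih =>
    intro t h e he
    obtain ⟨b, p⟩ := x
    rw [leftJust, List.mem_cons] at he
    rcases he with h' | h'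
    · subst h'; exact le_max_left _ _
    · have h2 : 0 ≤ p.2 := h (b, p) (by simp)
      have := ih (max t p.1 + p.2) (fun x hx => h x (by simp [hx])) e h'
      have : t ≤ max t p.1 + p.2 := by
        have := le_max_left t p.1; linarith
      linarith [ih (max t p.1 + p.2) (fun x hx => h x (by simp [hx])) e h']

lemma mem_leftJust : ∀ (L : List (Bool × Platoon)) (t : ℝ) (x : Bool × Platoon),
    x ∈ L → ∃ c, (x.1, x.2, c) ∈ leftJust t L := by
  intro L
  induction L with
  | nil => intro t x hx; simp at hx
  | cons y L ih =>
    intro t x hx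
    obtain ⟨b, p⟩ := y
    rw [List.mem_cons] at hx
    rcases hx with h | h
    · exact ⟨max t p.1, by rw [leftJust]; subst h; simp⟩
    · obtain ⟨c, hc⟩ := ih (max t p.1 + p.2) x h
      exact ⟨c, by rw [leftJust]; simp [hc]⟩

lemma leftJust_mono : ∀ (L : List (Bool × Platoon)) (u v : ℝ), u ≤ v →
    ∀ e ∈ leftJust u L, ∃ c, (e.1, e.2.1, c) ∈ leftJust v L ∧ e.2.2 ≤ c := by
  intro L
  induction L with
  | nil => intro u v _ e he; simp [leftJust] at he
  | cons x L ih =>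
    intro u v huv e he
    obtain ⟨b, p⟩ := x
    rw [leftJust, List.mem_cons] at he
    rcases he with h | h
    · subst h
      exact ⟨max v p.1, by rw [leftJust]; simp, max_le_max huv le_rfl⟩
    · obtain ⟨c, hc, hle⟩ := ih (max u p.1 + p.2) (max v p.1 + p.2)
        (by have := max_le_max huv (le_refl p.1); linarith) e h
      exact ⟨c, by rw [leftJust]; simp [hc], hle⟩

lemma laneProj_leftJust (b : Bool) : ∀ (L : List (Bool × Platoon)) (t : ℝ),
    laneProj b (leftJust t L) = (L.filter (fun e => e.1 == b)).map (fun e => e.2) := by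
  intro L
  induction L with
  | nil => intro t; simp [leftJust, laneProj]
  | cons x L ih =>
    intro t
    obtain ⟨c, p⟩ := x
    by_cases h : c = b
    · subst h
      simp [leftJust, laneProj, List.filter_cons] at ih ⊢
      exact ih _
    · have hb : (c == b) = false := by simp [h]
      simp [leftJust, laneProj, List.filter_cons, hb] at ih ⊢
      exact ih _

lemma leftJustStart_cons (x : Bool × Platoon) (L : List (Bool × Platoon)) :
    leftJustStart (x :: L) = leftJust x.2.1 (x :: L) := by
  obtain ⟨b, p⟩ := x
  simp [leftJustStart, leftJust]

lemma leftJust_eq_start (b : Bool) (p : Platoon) (L : List (Bool × Platoon)) (t : ℝ)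
    (h : t ≤ p.1) : leftJust t ((b, p) :: L) = leftJustStart ((b, p) :: L) := by
  simp [leftJustStart, leftJust, max_eq_right h]

lemma laneProj_leftJustStart (b : Bool) (L : List (Bool × Platoon)) :
    laneProj b (leftJustStart L) = (L.filter (fun e => e.1 == b)).map (fun e => e.2) := by
  cases L with
  | nil => simp [leftJustStart, laneProj]
  | cons x L => rw [leftJustStart_cons, laneProj_leftJust]

lemma leftJustStart_rel (L : List (Bool × Platoon)) :
    ∀ e ∈ leftJustStart L, e.2.1.1 ≤ e.2.2 := by
  cases L with
  | nil => simp [leftJustStart]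
  | cons x L => rw [leftJustStart_cons]; exact leftJust_rel _ _

lemma leftJustStart_chain (L : List (Bool × Platoon)) :
    (leftJustStart L).Chain' (fun e f => e.2.2 + e.2.1.2 ≤ f.2.2) := by
  cases L with
  | nil => simp [leftJustStart]; exact List.isChain_nil
  | cons x L => rw [leftJustStart_cons]; exact leftJust_chain _ _

lemma finT_mono : ∀ (L : List (Bool × Platoon)) {t u : ℝ}, t ≤ u →
    finT t L ≤ finT u L := by
  intro L
  induction L with
  | nil => intro t u h; simpa [finT] using h
  | cons x L ih =>
    intro t u h
    obtain ⟨b, p⟩ := x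
    rw [finT, finT]
    exact ih (by have := max_le_max h (le_refl p.1); linarith)

lemma finT_add_le : ∀ (L : List (Bool × Platoon)) (t s : ℝ), 0 ≤ s →
    finT (t + s) L ≤ finT t L + s := by
  intro L
  induction L with
  | nil => intro t s _; simp [finT]
  | cons x L ih =>
    intro t s hs
    obtain ⟨b, p⟩ := x
    rw [finT, finT]
    calc finT (max (t + s) p.1 + p.2) L ≤ finT (max t p.1 + p.2 + s) L := by
          apply finT_mono
          have h1 : max (t + s) p.1 ≤ max t p.1 + s := by
            apply max_le
            · linarith [le_max_left t p.1]
            · linarith [le_max_right t p.1]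
          linarith
      _ = finT ((max t p.1 + p.2) + s) L := by ring_nf
      _ ≤ finT (max t p.1 + p.2) L + s := ih _ _ hs

lemma finT_max : ∀ (L : List (Bool × Platoon)) (a b : ℝ),
    finT (max a b) L = max (finT a L) (finT b L) := by
  intro L
  induction L with
  | nil => intro a b; simp [finT]
  | cons x L ih =>
    intro a b
    obtain ⟨c, p⟩ := x
    rw [finT, finT, finT, ← ih]
    congr 1
    rw [sup_sup_distrib_right, max_add_add_right]

lemma finT_last : ∀ (L : List (Bool × Platoon)), L ≠ [] → ∀ (t : ℝ),
    ∃ e ∈ leftJust t L, finT t L = e.2.2 + e.2.1.2 := by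
  intro L
  induction L with
  | nil => simp
  | cons x L ih =>
    intro _ t
    obtain ⟨b, p⟩ := x
    cases L with
    | nil => exact ⟨(b, p, max t p.1), by simp [leftJust], by simp [finT]⟩
    | cons y L' =>
      obtain ⟨e, he, hfe⟩ := ih (by simp) (max t p.1 + p.2)
      exact ⟨e, by rw [leftJust]; simp [he], by rw [finT]; exact hfe⟩

lemma runDelay (d : ℝ) (hd : 0 ≤ d) : ∀ (K : List (Bool × Platoon)) (u : ℝ),
    (K.map (fun e => e.2)).Chain' (fun p q : Platoon => p.1 + p.2 ≤ q.1) →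
    (∀ x ∈ K.head?, u ≤ x.2.1 + d) →
    ∀ e ∈ leftJust u K, e.2.2 - e.2.1.1 ≤ d := by
  intro K
  induction K with
  | nil => intro u _ _ e he; simp [leftJust] at he
  | cons x K ih =>
    intro u hchain hhead e he
    obtain ⟨b, p⟩ := x
    rw [List.map_cons] at hchain
    have hup : u ≤ p.1 + d := hhead (b, p) rfl
    rw [leftJust, List.mem_cons] at he
    rcases he with h | h
    · subst h
      show max u p.1 - p.1 ≤ d
      have : max u p.1 ≤ p.1 + d := max_le hup (by linarith)
      linarith
    · refine ih (max u p.1 + p.2) hchain.tail ?_ e h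
      intro y hy
      cases K with
      | nil => simp at hy
      | cons z K' =>
        have hy' : z = y := by simpa using hy
        rw [List.map_cons] at hchain
        have hpz : p.1 + p.2 ≤ y.2.1 := hy' ▸ (List.isChain_cons_cons.mp hchain).1
        have hm : max u p.1 ≤ p.1 + d := max_le hup (by linarith)
        linarith

lemma filter_head_decomp {α : Type*} (p : α → Bool) : ∀ (L : List α) (a : α),
    (L.filter p).head? = some a →
    ∃ M N, L = M ++ a :: N ∧ (∀ x ∈ M, p x = false) := by
  intro L
  induction L with
  | nil => intro a h; simp at h
  | cons x L ih =>
    intro a h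
    by_cases hx : p x
    · rw [List.filter_cons_of_pos hx] at h
      simp at h
      exact ⟨[], L, by simp [h], by simp⟩
    · rw [List.filter_cons_of_neg hx] at h
      obtain ⟨M, N, h1, h2⟩ := ih a h
      refine ⟨x :: M, N, by simp [h1], ?_⟩
      intro y hy
      rcases List.mem_cons.mp hy with h' | h'
      · subst h'; exact Bool.eq_false_iff.mpr hx
      · exact h2 y h'

/-- Exchange step for the Y-merge greedy algorithm.  `S` is the left-justified
valid schedule, with delay at most `d`, of a crossing order `σP ++ σR`, where the
platoons of the prefix `σP` (an initial segment of each lane) all finish by time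
`t`.  Among the remaining platoons `σR`, `pᵢ = (ri, li)` is the first one on lane
`bi` and `pⱼ = (rj, lj)` is the first one on the other lane, with `ri ≤ rj` and
`max t ri + li - rj ≤ d`, but in `S` platoon `pⱼ` crosses before `pᵢ`.  Then the
left-justified schedule of the order obtained by moving `pᵢ` to cross immediately
after `σP` (keeping all other platoons in the same relative order) is also valid
with delay at most `d`. -/
theorem stmt4 (A B : List Platoon) (hA : LaneOK A) (hB : LaneOK B)
    (d t : ℝ) (σP σR : List (Bool × Platoon))
    (bi : Bool) (ri li rj lj : ℝ)
    (hvalid : ValidSeq A B (leftJustStart (σP ++ σR)))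
    (hdelay : ∀ e ∈ leftJustStart (σP ++ σR), e.2.2 - e.2.1.1 ≤ d)
    (ht : ∀ e ∈ (leftJustStart (σP ++ σR)).take σP.length, e.2.2 + e.2.1.2 ≤ t)
    (hpi : (σR.filter (fun e => e.1 == bi)).head? = some (bi, (ri, li)))
    (hpj : (σR.filter (fun e => e.1 == !bi)).head? = some (!bi, (rj, lj)))
    (hrij : ri ≤ rj)
    (hd : max t ri + li - rj ≤ d)
    (hfirst : σR.head? = some (!bi, (rj, lj))) :
    ValidSeq A B (leftJustStart (σP ++ (bi, (ri, li)) :: σR.erase (bi, (ri, li)))) ∧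
    ∀ e ∈ leftJustStart (σP ++ (bi, (ri, li)) :: σR.erase (bi, (ri, li))),
      e.2.2 - e.2.1.1 ≤ d := by
  have hbeq1 : ((!bi) == bi) = false := by cases bi <;> rfl
  have hbeq2 : (bi == (!bi)) = false := by cases bi <;> rfl
  have hflip : ∀ a : Bool, (a == bi) = false → (a == !bi) = true := by
    cases bi <;> decide
  cases σR with
  | nil => simp at hfirst
  | cons x σR₁ =>
  have hx : x = (!bi, (rj, lj)) := by simpa using hfirst
  subst hx
  rw [List.filter_cons] at hpi
  rw [show (((!bi, ((rj : ℝ), (lj : ℝ))) : Bool × Platoon).1 == bi) = false from hbeq1] at hpi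
  simp only [Bool.false_eq_true, if_false] at hpi
  obtain ⟨M, N, hMN, hMfalse⟩ := filter_head_decomp _ σR₁ _ hpi
  subst hMN
  have hpinotM : (bi, ((ri : ℝ), (li : ℝ))) ∉ M := fun hmem => by
    simpa using hMfalse _ hmem
  have hpjnepi : ((!bi, ((rj : ℝ), (lj : ℝ))) : Bool × Platoon) ≠ (bi, (ri, li)) := by
    intro h
    have := congrArg Prod.fst h
    simp at this
  have herase : (((!bi, (rj, lj)) : Bool × Platoon) :: (M ++ (bi, (ri, li)) :: N)).erase (bi, (ri, li))
      = (!bi, (rj, lj)) :: (M ++ N) := by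
    rw [List.erase_cons_tail (by simpa using hpjnepi),
        List.erase_append_right _ hpinotM, List.erase_cons_head]
  rw [herase]
  -- named lists
  set oldR : List (Bool × Platoon) := (!bi, (rj, lj)) :: (M ++ (bi, (ri, li)) :: N) with holdR
  set newR : List (Bool × Platoon) := (bi, (ri, li)) :: ((!bi, (rj, lj)) :: (M ++ N)) with hnewR
  clear_value oldR newR
  -- the common prefix and its finishing time
  obtain ⟨Pre, T, hold, hnew, hTt⟩ :
      ∃ (Pre : List (Bool × Platoon × ℝ)) (T : ℝ),
        leftJustStart (σP ++ oldR) = Pre ++ leftJust T oldR ∧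
        leftJustStart (σP ++ newR) = Pre ++ leftJust T newR ∧
        max T ri ≤ max t ri := by
    cases σP with
    | nil =>
      refine ⟨[], ri, ?_, ?_, by rw [max_self]; exact le_max_right t ri⟩
      · rw [List.nil_append, List.nil_append, holdR,
            leftJust_eq_start _ _ _ _ (by exact hrij)]
      · rw [List.nil_append, List.nil_append, hnewR,
            leftJust_eq_start _ _ _ _ (le_refl ri)]
    | cons q σP' =>
      refine ⟨leftJust q.2.1 (q :: σP'), finT q.2.1 (q :: σP'), ?_, ?_, ?_⟩
      · rw [List.cons_append, leftJustStart_cons, ← List.cons_append, leftJust_append]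
      · rw [List.cons_append, leftJustStart_cons, ← List.cons_append, leftJust_append]
      · obtain ⟨e, he, hfe⟩ := finT_last (q :: σP') (by simp) q.2.1
        have hmem : e ∈ (leftJustStart ((q :: σP') ++ oldR)).take (q :: σP').length := by
          rw [List.cons_append, leftJustStart_cons, ← List.cons_append, leftJust_append,
              List.take_left' (leftJust_length _ _)]
          exact he
        have hT : finT q.2.1 (q :: σP') ≤ t := by
          rw [hfe]; exact ht e hmem
        exact max_le_max hT le_rfl
  -- lane projections of the old order
  have hprojA : ((σP ++ oldR).filter (fun e => e.1 == false)).map (fun e => e.2) = A := by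
    rw [← laneProj_leftJustStart false (σP ++ oldR)]; exact hvalid.1
  have hprojB : ((σP ++ oldR).filter (fun e => e.1 == true)).map (fun e => e.2) = B := by
    rw [← laneProj_leftJustStart true (σP ++ oldR)]; exact hvalid.2.1
  -- positive lengths
  have hlen : ∀ x ∈ σP ++ oldR, 0 < x.2.2 := by
    intro x hx
    cases hxb : x.1 with
    | false =>
      apply hA.1
      rw [← hprojA]
      exact List.mem_map_of_mem (List.mem_filter.mpr ⟨hx, by simp [hxb]⟩)
    | true =>
      apply hB.1
      rw [← hprojB]
      exact List.mem_map_of_mem (List.mem_filter.mpr ⟨hx, by simp [hxb]⟩)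
  have hpiR : ((bi, ((ri : ℝ), (li : ℝ))) : Bool × Platoon) ∈ oldR := by
    rw [holdR]; simp
  have hli : 0 < li := hlen _ (List.mem_append_right _ hpiR)
  -- d is nonnegative
  have hpjmem : ((!bi), ((rj : ℝ), (lj : ℝ)), max T rj) ∈ leftJustStart (σP ++ oldR) := by
    rw [hold, holdR, leftJust]
    exact List.mem_append_right _ List.mem_cons_self
  have hd0 : 0 ≤ d := by
    have hdj : max T rj - rj ≤ d := hdelay _ hpjmem
    have : rj ≤ max T rj := le_max_right _ _
    linarith
  -- T ≤ ri + d
  have hTd : T ≤ ri + d := by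
    obtain ⟨c, hc⟩ := mem_leftJust oldR T (bi, (ri, li)) hpiR
    have hTc : T ≤ c :=
      leftJust_ge oldR T
        (fun x hx => le_of_lt (hlen x (List.mem_append_right _ hx))) _ hc
    have hcd : c - ri ≤ d := hdelay _ (by rw [hold]; exact List.mem_append_right _ hc)
    linarith
  -- the chain of releases on lane !bi
  have hMself : M.filter (fun e => e.1 == !bi) = M :=
    List.filter_eq_self.mpr (fun x hx => hflip _ (hMfalse x hx))
  have hfiltR : ((σP ++ oldR).filter (fun e => e.1 == !bi)).map (fun e => e.2)
      = ((σP.filter (fun e => e.1 == !bi)).map (fun e => e.2))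
        ++ ((((rj : ℝ), (lj : ℝ)) :: M.map (fun e => e.2))
          ++ ((N.filter (fun e => e.1 == !bi)).map (fun e => e.2))) := by
    rw [holdR]
    simp [List.filter_append, List.filter_cons, hbeq2, hMself]
  have hLaneNB : LaneOK (((σP ++ oldR).filter (fun e => e.1 == !bi)).map (fun e => e.2)) := by
    cases bi
    · exact hprojB ▸ hB
    · exact hprojA ▸ hA
  have hchainPJ : ((((!bi, ((rj : ℝ), (lj : ℝ))) : Bool × Platoon) :: M).map (fun e => e.2)).Chain'
      (fun p q : Platoon => p.1 + p.2 ≤ q.1) := by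
    have h1 := hLaneNB.2
    rw [hfiltR] at h1
    have h2 := (List.isChain_append.mp h1).2.1
    have h3 := (List.isChain_append.mp h2).1
    have h4 : List.IsChain (fun p q : Platoon => p.1 + p.2 ≤ q.1) ((rj, lj) :: List.map (fun e => e.2) M) := by simpa using h3
    exact h4
  -- finishing times
  have hstep : finT ri (((!bi, ((rj : ℝ), (lj : ℝ))) : Bool × Platoon) :: M)
      ≤ finT T (((!bi, (rj, lj)) : Bool × Platoon) :: M) := by
    rw [finT, finT]
    apply finT_mono
    have h1 : max ri rj ≤ max T rj := by
      rw [max_eq_right hrij]; exact le_max_right _ _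
    show max ri rj + lj ≤ max T rj + lj
    linarith
  set pjM : List (Bool × Platoon) := (!bi, (rj, lj)) :: M with hpjM
  set F := finT T pjM with hF
  set u := max T ri + li with hu
  set F' := finT u pjM with hF'def
  set w := max F ri + li with hw
  clear_value pjM F u F' w
  have hF'w : F' ≤ w := by
    have h1 : finT (max T ri + li) pjM ≤ finT (max T ri) pjM + li :=
      finT_add_le pjM (max T ri) li (le_of_lt hli)
    rw [finT_max, ← hF] at h1
    rw [hF'def, hu, hw]
    have h2 : max F (finT ri pjM) ≤ F := max_le le_rfl hstep
    have h3 : F ≤ max F ri := le_max_left _ _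
    linarith
  -- full decompositions
  have holdsplit : (oldR : List (Bool × Platoon)) = pjM ++ ((bi, (ri, li)) :: N) := by
    rw [holdR, hpjM]; simp
  have holdfull : leftJustStart (σP ++ oldR)
      = Pre ++ (leftJust T pjM ++ ((bi, ((ri : ℝ), (li : ℝ)), max F ri) :: leftJust w N)) := by
    rw [hold, holdsplit, leftJust_append, ← hF, leftJust_cons, ← hw]
  have hnewsplit : (newR : List (Bool × Platoon)) = (bi, (ri, li)) :: (pjM ++ N) := by
    rw [hnewR, hpjM]; simp
  have hnewfull : leftJustStart (σP ++ newR)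
      = Pre ++ ((bi, ((ri : ℝ), (li : ℝ)), max T ri)
          :: (leftJust u pjM ++ leftJust F' N)) := by
    rw [hnew, hnewsplit, leftJust_cons, leftJust_append, ← hu, ← hF'def]
  -- delays in the new schedule
  have hdelay' : ∀ e ∈ leftJustStart (σP ++ newR), e.2.2 - e.2.1.1 ≤ d := by
    intro e he
    rw [hnewfull] at he
    rcases List.mem_append.mp he with hPre | hrest
    · exact hdelay e (by rw [hold]; exact List.mem_append_left _ hPre)
    · rcases List.mem_cons.mp hrest with heq | hrest2
      · subst heq
        show max T ri - ri ≤ d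
        have : max T ri ≤ ri + d := max_le hTd (by linarith)
        linarith
      · rcases List.mem_append.mp hrest2 with h3 | h4
        · refine runDelay d hd0 pjM u hchainPJ ?_ e h3
          intro y hy
          have hy' : (!bi, ((rj : ℝ), (lj : ℝ))) = y := by
            rw [hpjM] at hy; simpa using hy
          subst hy'
          show u ≤ rj + d
          have h5 : max T ri ≤ max t ri := hTt
          rw [hu]
          linarith
        · obtain ⟨c2, hc2, hle2⟩ := leftJust_mono N F' w hF'w e h4
          have hmem2 : (e.1, e.2.1, c2) ∈ leftJustStart (σP ++ oldR) := by
            rw [holdfull]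
            refine List.mem_append_right _ (List.mem_append_right _ ?_)
            exact List.mem_cons_of_mem _ hc2
          have h6 : c2 - e.2.1.1 ≤ d := hdelay _ hmem2
          linarith
  -- lane projections agree
  have hMnilbi : M.filter (fun e => e.1 == bi) = [] :=
    List.filter_eq_nil_iff.mpr (fun x hx => by simp [hMfalse x hx])
  have hfilt : ∀ b, (σP ++ newR).filter (fun e => e.1 == b)
      = (σP ++ oldR).filter (fun e => e.1 == b) := by
    intro b
    rw [List.filter_append, List.filter_append]
    congr 1
    by_cases hb : b = bi
    · subst hb
      rw [holdR, hnewR]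
      simp [List.filter_cons, List.filter_append, hbeq1, hMnilbi]
    · have hbb : b = !bi := by
        cases b <;> cases bi <;> simp_all
      subst hbb
      rw [holdR, hnewR]
      simp [List.filter_cons, List.filter_append, hbeq2, hMself]
  refine ⟨⟨?_, ?_, leftJustStart_rel _, leftJustStart_chain _⟩, hdelay'⟩
  · rw [laneProj_leftJustStart, hfilt false, hprojA]
  · rw [laneProj_leftJustStart, hfilt true, hprojB]
end

section
/- Single-lane greedy delay formula: consider m platoons on a single lane with release times r_1 < r_2 < ⋯ < r_m, lengths ℓ_1, …, ℓ_m > 0 satisfying r_j + ℓ_j ≤ r_{j+1} for all j, and gaps g_j = r_{j+1} − (r_j + ℓ_j) ≥ 0. For a start time t, define the greedy crossing times c_1 = max(t, r_1) and c_{j+1} = max(c_j + ℓ_j, r_{j+1}). Then for every j, the delay of platoon j satisfies c_j − r_j = max(0, d_1 − Σ_{1 ≤ i < j} g_i), where d_1 = max(0, t − r_1) is the delay of the first platoon; in particular every platoon's delay is at most d_1 (the first platoon is the most heavily delayed). -/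
/-- Single-lane greedy delay formula.  `m` platoons on one lane have release times
`r 0 < r 1 < ⋯ < r (m-1)`, positive lengths `l j`, and disjoint release ranges
`r j + l j ≤ r (j+1)`, with gaps `g j = r (j+1) - (r j + l j) ≥ 0`.  Starting at
time `t`, the greedy crossing times are `c 0 = max t (r 0)` and
`c (j+1) = max (c j + l j) (r (j+1))`.  Then the delay of platoon `j` is
`c j - r j = max 0 (d₁ - Σ_{i<j} g i)` where `d₁ = max 0 (t - r 0)` is the delay
of the first platoon; in particular every platoon's delay is at most `d₁`. -/
theorem stmt7 (m : ℕ) (r l : ℕ → ℝ) (t : ℝ)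
    (hl : ∀ j < m, 0 < l j)
    (hsep : ∀ j, j + 1 < m → r j + l j ≤ r (j + 1))
    (c : ℕ → ℝ)
    (hc0 : c 0 = max t (r 0))
    (hcs : ∀ j, j + 1 < m → c (j + 1) = max (c j + l j) (r (j + 1)))
    (g : ℕ → ℝ)
    (hg : ∀ j, g j = r (j + 1) - (r j + l j)) :
    ∀ j < m, c j - r j = max 0 (max 0 (t - r 0) - ∑ i ∈ Finset.range j, g i) ∧
      c j - r j ≤ max 0 (t - r 0) := by
  have key : ∀ j, j < m → c j - r j = max 0 (max 0 (t - r 0) - ∑ i ∈ Finset.range j, g i) := by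
    intro j
    induction j with
    | zero =>
      intro _
      simp [hc0]
      rcases le_total t (r 0) with h | h
      · rw [max_eq_right h, max_eq_left (by linarith), ]
        · linarith
      · rw [max_eq_left h, max_eq_right (by linarith)]
    | succ n ih =>
      intro hlt
      have hn : n < m := Nat.lt_of_succ_lt hlt
      have hIH := ih hn
      rw [hcs n hlt, Finset.sum_range_succ]
      have hr : r (n + 1) = r n + l n + g n := by rw [hg n]; ring
      have hgnn : 0 ≤ g n := by rw [hg n]; have := hsep n hlt; linarith
      set x := max 0 (t - r 0) - ∑ i ∈ Finset.range n, g i with hx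
      have h1 : c n + l n - r (n+1) = max 0 x - g n := by
        rw [hr]; linarith [hIH]
      have goal : max (c n + l n) (r (n+1)) - r (n+1) = max 0 (x - g n) := by
        rcases le_total x 0 with h | h
        · rw [max_eq_left h] at h1
          rw [max_eq_left (by linarith : x - g n ≤ 0)]
          rw [max_eq_right (by linarith : c n + l n ≤ r (n+1))]; ring
        · rw [max_eq_right h] at h1
          rcases le_total (x - g n) 0 with h2 | h2
          · rw [max_eq_left h2, max_eq_right (by linarith : c n + l n ≤ r (n+1))]; ring
          · rw [max_eq_right h2, max_eq_left (by linarith : r (n+1) ≤ c n + l n)]; linarith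
      rw [goal, hx]; ring_nf
  intro j hj
  refine ⟨key j hj, ?_⟩
  rw [key j hj]
  have hs : 0 ≤ ∑ i ∈ Finset.range j, g i := by
    apply Finset.sum_nonneg
    intro i hi
    rw [hg i]
    have : i + 1 < m := by
      have := Finset.mem_range.mp hi
      omega
    have := hsep i this
    linarith
  have : 0 ≤ max 0 (t - r 0) := le_max_left _ _
  apply max_le (by linarith)
  linarith [le_refl (max 0 (t - r 0))]
end

section
/- If there is a partition of the index set {1, …, ℓ} into sets U and V with Σ_{i ∈ U} x_i = Σ_{i ∈ V} x_i = q, then the associated MULTI-CROSS instance admits a valid schedule with delay at most 2q + 1. -/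
/-- Lanes of the MULTI-CROSS instance built from `x 1, …, x l` with sum `2 * q`:
lane `a` is `0`, lane `b` is `1`, and the merge lanes `m_1, …, m_{l+1}` are
`2, …, l + 2`.  Platoon `0` (the long platoon `p₁`) is on lane `a`; platoon `1`
(the short platoon `p₂`) is on lane `b`; platoon `2` (the long platoon `p₃`) is
on merge lane `m_{l+1}`; and for `1 ≤ i ≤ l`, platoon `2 + i` (which is
`p_{3+i}`) is on merge lane `m_i`. -/
def mcLane (l : ℕ) (i : Fin (l + 3)) : ℕ :=
  if (i : ℕ) = 0 then 0
  else if (i : ℕ) = 1 then 1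
  else if (i : ℕ) = 2 then l + 2
  else (i : ℕ) - 1

/-- Release times: `p₁` is released at `0`, `p₂` at `2q`, and all merge-lane
platoons at `q`. -/
noncomputable def mcR (q : ℕ) {l : ℕ} (i : Fin (l + 3)) : ℝ :=
  if (i : ℕ) = 0 then 0
  else if (i : ℕ) = 1 then 2 * q
  else q

/-- Lengths: `p₁` and `p₃` have length `4(q+1)`, `p₂` has length `1`, and
`p_{3+i}` has length `x i`. -/
noncomputable def mcLen (q : ℕ) (x : ℕ → ℕ) {l : ℕ} (i : Fin (l + 3)) : ℝ :=
  if (i : ℕ) = 0 then 4 * (q + 1)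
  else if (i : ℕ) = 1 then 1
  else if (i : ℕ) = 2 then 4 * (q + 1)
  else x ((i : ℕ) - 2)

/-- Two platoons are incompatible exactly when they lie on two distinct merge
lanes, or when one of them is `p₂` (the platoon on lane `b` is incompatible with
every other platoon); `p₁` on lane `a` is compatible with all merge-lane
platoons. -/
def mcIncompat (l : ℕ) (i j : Fin (l + 3)) : Prop :=
  i ≠ j ∧ ((i : ℕ) = 1 ∨ (j : ℕ) = 1 ∨
    (2 ≤ (i : ℕ) ∧ 2 ≤ (j : ℕ) ∧ mcLane l i ≠ mcLane l j))

/-- A valid schedule for the MULTI-CROSS instance: each platoon crosses no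
earlier than its release time; platoons on the same lane cross in release order,
one finishing before the next crosses; and the open crossing intervals of
incompatible platoons are disjoint. -/
def mcValid (l q : ℕ) (x : ℕ → ℕ) (c : Fin (l + 3) → ℝ) : Prop :=
  (∀ i, mcR q i ≤ c i) ∧
  (∀ i j, i ≠ j → mcLane l i = mcLane l j →
    mcR q i + mcLen q x i ≤ mcR q j → c i + mcLen q x i ≤ c j) ∧
  (∀ i j, mcIncompat l i j →
    Disjoint (Set.Ioo (c i) (c i + mcLen q x i))
             (Set.Ioo (c j) (c j + mcLen q x j)))

lemma mc_disj_of_le {a b c d : ℝ} (h : b ≤ c) :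
    Disjoint (Set.Ioo a b) (Set.Ioo c d) := by
  rw [Set.disjoint_left]
  rintro y ⟨_, h1⟩ ⟨h2, _⟩
  linarith

lemma mc_prefix_le (x : ℕ → ℕ) (S : Finset ℕ) {i j : ℕ} (hi : i ∈ S) (hij : i < j) :
    (∑ k ∈ S.filter (· < i), (x k : ℝ)) + x i ≤ ∑ k ∈ S.filter (· < j), (x k : ℝ) := by
  have hsub : insert i (S.filter (· < i)) ⊆ S.filter (· < j) := by
    intro a ha
    rcases Finset.mem_insert.1 ha with rfl | ha
    · exact Finset.mem_filter.2 ⟨hi, hij⟩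
    · obtain ⟨h1, h2⟩ := Finset.mem_filter.1 ha
      exact Finset.mem_filter.2 ⟨h1, by omega⟩
  calc (∑ k ∈ S.filter (· < i), (x k : ℝ)) + x i
      = ∑ k ∈ insert i (S.filter (· < i)), (x k : ℝ) := by
        rw [Finset.sum_insert (by simp)]; ring
    _ ≤ _ := Finset.sum_le_sum_of_subset_of_nonneg hsub (by intros; positivity)

lemma mc_prefix_total (x : ℕ → ℕ) (S : Finset ℕ) {i : ℕ} (hi : i ∈ S) :
    (∑ k ∈ S.filter (· < i), (x k : ℝ)) + x i ≤ ∑ k ∈ S, (x k : ℝ) := by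
  have hsub : insert i (S.filter (· < i)) ⊆ S := by
    intro a ha
    rcases Finset.mem_insert.1 ha with rfl | ha
    · exact hi
    · exact (Finset.mem_filter.1 ha).1
  calc (∑ k ∈ S.filter (· < i), (x k : ℝ)) + x i
      = ∑ k ∈ insert i (S.filter (· < i)), (x k : ℝ) := by
        rw [Finset.sum_insert (by simp)]; ring
    _ ≤ _ := Finset.sum_le_sum_of_subset_of_nonneg hsub (by intros; positivity)

/-- If the index set `{1, …, l}` can be partitioned into `U` and `V` with
`Σ_{i ∈ U} x i = Σ_{i ∈ V} x i = q`, then the associated MULTI-CROSS instance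
admits a valid schedule with delay at most `2q + 1`. -/
theorem stmt11 (l q : ℕ) (x : ℕ → ℕ) (hq : 0 < q)
    (hx : ∀ i, 1 ≤ i → i ≤ l → 0 < x i)
    (hsum : ∑ i ∈ Finset.Icc 1 l, x i = 2 * q)
    (U V : Finset ℕ) (hUV : U ∪ V = Finset.Icc 1 l) (hdisj : Disjoint U V)
    (hU : ∑ i ∈ U, x i = q) (hV : ∑ i ∈ V, x i = q) :
    ∃ c : Fin (l + 3) → ℝ, mcValid l q x c ∧
      ∀ i, c i - mcR q i ≤ 2 * (q : ℝ) + 1 := by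
  classical
  have hq' : (1 : ℝ) ≤ q := by exact_mod_cast hq
  have hUr : ∑ i ∈ U, (x i : ℝ) = q := by push_cast [← hU]; ring
  have hVr : ∑ i ∈ V, (x i : ℝ) = q := by push_cast [← hV]; ring
  set pU : ℕ → ℝ := fun a => ∑ j ∈ U.filter (· < a), (x j : ℝ) with hpU
  set pV : ℕ → ℝ := fun a => ∑ j ∈ V.filter (· < a), (x j : ℝ) with hpV
  set c : Fin (l + 3) → ℝ := fun k =>
    if (k : ℕ) = 0 then 2 * q + 1
    else if (k : ℕ) = 1 then 2 * q
    else if (k : ℕ) = 2 then 3 * q + 1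
    else if (k : ℕ) - 2 ∈ U then q + pU ((k : ℕ) - 2)
    else 2 * q + 1 + pV ((k : ℕ) - 2) with hcdef
  have pUnn : ∀ a, 0 ≤ pU a := fun a => Finset.sum_nonneg (by intros; positivity)
  have pVnn : ∀ a, 0 ≤ pV a := fun a => Finset.sum_nonneg (by intros; positivity)
  have pUle : ∀ a ∈ U, pU a + x a ≤ q := by
    intro a ha; rw [← hUr]; exact mc_prefix_total x U ha
  have pVle : ∀ a ∈ V, pV a + x a ≤ q := by
    intro a ha; rw [← hVr]; exact mc_prefix_total x V ha
  -- value lemmas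
  have hc0 : ∀ k : Fin (l + 3), (k : ℕ) = 0 → c k = 2 * q + 1 := by
    intro k hk; simp only [hcdef]; rw [if_pos hk]
  have hc1 : ∀ k : Fin (l + 3), (k : ℕ) = 1 → c k = 2 * q := by
    intro k hk; have h0 : (k : ℕ) ≠ 0 := by omega
    simp only [hcdef]; rw [if_neg h0, if_pos hk]
  have hc2 : ∀ k : Fin (l + 3), (k : ℕ) = 2 → c k = 3 * q + 1 := by
    intro k hk; have h0 : (k : ℕ) ≠ 0 := by omega
    have h1 : (k : ℕ) ≠ 1 := by omega
    simp only [hcdef]; rw [if_neg h0, if_neg h1, if_pos hk]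
  have hcU : ∀ k : Fin (l + 3), 3 ≤ (k : ℕ) → (k : ℕ) - 2 ∈ U →
      c k = q + pU ((k : ℕ) - 2) := by
    intro k hk hm
    have h0 : (k : ℕ) ≠ 0 := by omega
    have h1 : (k : ℕ) ≠ 1 := by omega
    have h2 : (k : ℕ) ≠ 2 := by omega
    simp only [hcdef]; rw [if_neg h0, if_neg h1, if_neg h2, if_pos hm]
  have hcV : ∀ k : Fin (l + 3), 3 ≤ (k : ℕ) → (k : ℕ) - 2 ∉ U →
      c k = 2 * q + 1 + pV ((k : ℕ) - 2) := by
    intro k hk hm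
    have h0 : (k : ℕ) ≠ 0 := by omega
    have h1 : (k : ℕ) ≠ 1 := by omega
    have h2 : (k : ℕ) ≠ 2 := by omega
    simp only [hcdef]; rw [if_neg h0, if_neg h1, if_neg h2, if_neg hm]
  have hlen : ∀ k : Fin (l + 3), 3 ≤ (k : ℕ) → mcLen q x k = x ((k : ℕ) - 2) := by
    intro k hk
    have h0 : (k : ℕ) ≠ 0 := by omega
    have h1 : (k : ℕ) ≠ 1 := by omega
    have h2 : (k : ℕ) ≠ 2 := by omega
    simp [mcLen, h0, h1, h2]
  have memIcc : ∀ k : Fin (l + 3), 3 ≤ (k : ℕ) → (k : ℕ) - 2 ∈ Finset.Icc 1 l := by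
    intro k hk
    have := k.isLt
    exact Finset.mem_Icc.2 ⟨by omega, by omega⟩
  have memV : ∀ k : Fin (l + 3), 3 ≤ (k : ℕ) → (k : ℕ) - 2 ∉ U → (k : ℕ) - 2 ∈ V := by
    intro k hk hm
    have : (k : ℕ) - 2 ∈ U ∪ V := by rw [hUV]; exact memIcc k hk
    rcases Finset.mem_union.1 this with h | h
    · exact absurd h hm
    · exact h
  -- bounds for merge platoons
  have mergeU : ∀ k : Fin (l + 3), 3 ≤ (k : ℕ) → (k : ℕ) - 2 ∈ U →
      (q : ℝ) ≤ c k ∧ c k + mcLen q x k ≤ 2 * q := by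
    intro k hk hm
    rw [hcU k hk hm, hlen k hk]
    have := pUnn ((k : ℕ) - 2)
    have := pUle _ hm
    constructor <;> linarith
  have mergeV : ∀ k : Fin (l + 3), 3 ≤ (k : ℕ) → (k : ℕ) - 2 ∉ U →
      (2 * (q : ℝ) + 1) ≤ c k ∧ c k + mcLen q x k ≤ 3 * q + 1 := by
    intro k hk hm
    rw [hcV k hk hm, hlen k hk]
    have := pVnn ((k : ℕ) - 2)
    have := pVle _ (memV k hk hm)
    constructor <;> linarith
  -- lane injectivity
  have laneinj : ∀ i j : Fin (l + 3), mcLane l i = mcLane l j → i = j := by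
    intro i j h
    have hi := i.isLt
    have hj := j.isLt
    unfold mcLane at h
    apply Fin.ext
    split_ifs at h <;> omega
  -- the key separation fact
  have key : ∀ i j : Fin (l + 3), mcIncompat l i j →
      c i + mcLen q x i ≤ c j ∨ c j + mcLen q x j ≤ c i := by
    intro i j ⟨hne, hcase⟩
    have hvne : (i : ℕ) ≠ (j : ℕ) := fun h => hne (Fin.ext h)
    rcases Nat.lt_or_ge (i : ℕ) 3 with hi3 | hi3
    · -- i ∈ {0,1,2}
      interval_cases hiv : (i : ℕ)
      · -- i = 0 : must have j = 1
        have hj1 : (j : ℕ) = 1 := by omega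
        right
        rw [hc0 i hiv, hc1 j hj1]
        simp only [mcLen, hj1]
        norm_num
      · -- i = 1
        rw [hc1 i hiv]
        have hleni : mcLen q x i = 1 := by simp [mcLen, hiv]
        rw [hleni]
        rcases Nat.lt_or_ge (j : ℕ) 3 with hj3 | hj3
        · interval_cases hjv : (j : ℕ)
          · left; rw [hc0 j hjv]
          · omega
          · left; rw [hc2 j hjv]; linarith
        · by_cases hm : (j : ℕ) - 2 ∈ U
          · right
            have := (mergeU j hj3 hm).2
            linarith
          · left
            have := (mergeV j hj3 hm).1
            linarith
      · -- i = 2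
        rw [hc2 i hiv]
        have hleni : mcLen q x i = 4 * (q + 1) := by simp [mcLen, hiv]
        rcases Nat.lt_or_ge (j : ℕ) 3 with hj3 | hj3
        · interval_cases hjv : (j : ℕ)
          · omega
          · right; rw [hc1 j hjv]; simp only [mcLen, hjv]; norm_num; linarith
          · omega
        · right
          by_cases hm : (j : ℕ) - 2 ∈ U
          · have := (mergeU j hj3 hm).2
            linarith
          · have := (mergeV j hj3 hm).2
            linarith
    · -- i is a merge platoon
      set a := (i : ℕ) - 2 with ha
      have haI := memIcc i hi3
      rcases Nat.lt_or_ge (j : ℕ) 3 with hj3 | hj3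
      · interval_cases hjv : (j : ℕ)
        · omega
        · -- j = 1
          rw [hc1 j hjv]
          have hlenj : mcLen q x j = 1 := by simp [mcLen, hjv]
          rw [hlenj]
          by_cases hm : a ∈ U
          · left
            have := (mergeU i hi3 hm).2
            linarith
          · right
            have := (mergeV i hi3 hm).1
            linarith
        · -- j = 2
          left
          rw [hc2 j hjv]
          by_cases hm : a ∈ U
          · have := (mergeU i hi3 hm).2
            linarith
          · have := (mergeV i hi3 hm).2
            linarith
      · -- both merge
        set b := (j : ℕ) - 2 with hb
        have hbI := memIcc j hj3
        have hab : a ≠ b := by omega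
        rw [hlen i hi3, hlen j hj3]
        by_cases hma : a ∈ U <;> by_cases hmb : b ∈ U
        · rw [hcU i hi3 hma, hcU j hj3 hmb]
          rcases Nat.lt_or_ge a b with hlt | hge
          · left
            have := mc_prefix_le x U hma hlt
            simp only [hpU]
            push_cast
            linarith [this]
          · right
            have hblt : b < a := by omega
            have := mc_prefix_le x U hmb hblt
            simp only [hpU]
            push_cast
            linarith [this]
        · left
          have := (mergeU i hi3 hma).2
          have := (mergeV j hj3 hmb).1
          rw [hlen i hi3] at *
          linarith
        · right
          have := (mergeU j hj3 hmb).2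
          have := (mergeV i hi3 hma).1
          rw [hlen j hj3] at *
          linarith
        · have hma' := memV i hi3 hma
          have hmb' := memV j hj3 hmb
          rw [hcV i hi3 hma, hcV j hj3 hmb]
          rcases Nat.lt_or_ge a b with hlt | hge
          · left
            have := mc_prefix_le x V hma' hlt
            simp only [hpV]
            push_cast
            linarith [this]
          · right
            have hblt : b < a := by omega
            have := mc_prefix_le x V hmb' hblt
            simp only [hpV]
            push_cast
            linarith [this]
  refine ⟨c, ⟨?_, ?_, ?_⟩, ?_⟩
  · -- release times
    intro i
    rcases Nat.lt_or_ge (i : ℕ) 3 with hi3 | hi3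
    · interval_cases hiv : (i : ℕ)
      · rw [hc0 i hiv]; simp [mcR, hiv]; positivity
      · rw [hc1 i hiv]; simp [mcR, hiv]
      · rw [hc2 i hiv]; simp [mcR, hiv]; linarith
    · have h0 : (i : ℕ) ≠ 0 := by omega
      have h1 : (i : ℕ) ≠ 1 := by omega
      have hr : mcR q i = q := by simp [mcR, h0, h1]
      rw [hr]
      by_cases hm : (i : ℕ) - 2 ∈ U
      · exact (mergeU i hi3 hm).1
      · have := (mergeV i hi3 hm).1
        linarith
  · -- same lane
    intro i j hne hlane _
    exact absurd (laneinj i j hlane) hne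
  · -- incompatibility
    intro i j hij
    rcases key i j hij with h | h
    · exact mc_disj_of_le h
    · exact (mc_disj_of_le h).symm
  · -- delay bound
    intro i
    rcases Nat.lt_or_ge (i : ℕ) 3 with hi3 | hi3
    · interval_cases hiv : (i : ℕ)
      · rw [hc0 i hiv]; simp [mcR, hiv]
      · rw [hc1 i hiv]; simp [mcR, hiv]; linarith
      · rw [hc2 i hiv]; simp [mcR, hiv]; linarith
    · have h0 : (i : ℕ) ≠ 0 := by omega
      have h1 : (i : ℕ) ≠ 1 := by omega
      have hr : mcR q i = q := by simp [mcR, h0, h1]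
      rw [hr]
      have hxa : (1 : ℝ) ≤ x ((i : ℕ) - 2) := by
        have := hx ((i : ℕ) - 2) (by omega) (by have := i.isLt; omega)
        exact_mod_cast this
      by_cases hm : (i : ℕ) - 2 ∈ U
      · have := (mergeU i hi3 hm).2
        rw [hlen i hi3] at this
        linarith
      · have := (mergeV i hi3 hm).2
        rw [hlen i hi3] at this
        linarith
end

section
/- If the associated MULTI-CROSS instance admits a valid schedule with delay at most 2q + 1, then there is a partition of the index set {1, …, ℓ} into sets U and V with Σ_{i ∈ U} x_i = Σ_{i ∈ V} x_i = q. -/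
lemma disj_Ioo {a b a' b' : ℝ} (h : Disjoint (Set.Ioo a b) (Set.Ioo a' b'))
    (h1 : a < b) (h2 : a' < b') : b ≤ a' ∨ b' ≤ a := by
  by_contra hc
  push_neg at hc
  obtain ⟨h3, h4⟩ := hc
  have hm : max a a' < min b b' := by
    rcases max_cases a a' with ⟨he, _⟩ | ⟨he, _⟩ <;>
      rcases min_cases b b' with ⟨he', _⟩ | ⟨he', _⟩ <;> rw [he, he'] <;> linarith
  have hma := le_max_left a a'
  have hma' := le_max_right a a'
  have hmb := min_le_left b b'
  have hmb' := min_le_right b b'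
  set t := (max a a' + min b b') / 2 with ht
  have ht1 : t ∈ Set.Ioo a b := ⟨by simp only [ht]; linarith, by simp only [ht]; linarith⟩
  have ht2 : t ∈ Set.Ioo a' b' := ⟨by simp only [ht]; linarith, by simp only [ht]; linarith⟩
  exact Set.disjoint_left.mp h ht1 ht2

lemma sum_len_le {ι : Type*} (s : Finset ι) (cc len : ι → ℝ)
    (hlen : ∀ i ∈ s, 0 ≤ len i) (a b : ℝ) (hab : a ≤ b)
    (hsub : ∀ i ∈ s, a ≤ cc i ∧ cc i + len i ≤ b)
    (hdisj : ∀ i ∈ s, ∀ j ∈ s, i ≠ j →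
      Disjoint (Set.Ioo (cc i) (cc i + len i)) (Set.Ioo (cc j) (cc j + len j))) :
    ∑ i ∈ s, len i ≤ b - a := by
  have hmeas := MeasureTheory.measure_biUnion_finset
    (μ := MeasureTheory.volume) (s := s)
    (f := fun i => Set.Ioo (cc i) (cc i + len i))
    (fun i hi j hj hne => hdisj i (Finset.mem_coe.mp hi) j (Finset.mem_coe.mp hj) hne)
    (fun i _ => measurableSet_Ioo)
  have hsubU : (⋃ i ∈ s, Set.Ioo (cc i) (cc i + len i)) ⊆ Set.Icc a b := by
    intro t ht
    simp only [Set.mem_iUnion] at ht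
    obtain ⟨i, hi, ht⟩ := ht
    obtain ⟨h1, h2⟩ := hsub i hi
    exact ⟨le_of_lt (lt_of_le_of_lt h1 ht.1), le_of_lt (lt_of_lt_of_le ht.2 h2)⟩
  have hle := MeasureTheory.measure_mono (μ := MeasureTheory.volume) hsubU
  rw [hmeas, Real.volume_Icc] at hle
  have heq : ∀ i ∈ s, MeasureTheory.volume (Set.Ioo (cc i) (cc i + len i))
      = ENNReal.ofReal (len i) := by
    intro i _; rw [Real.volume_Ioo, add_sub_cancel_left]
  rw [Finset.sum_congr rfl heq, ← ENNReal.ofReal_sum_of_nonneg hlen] at hle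
  exact (ENNReal.ofReal_le_ofReal_iff (by linarith)).mp hle


lemma mcR_0 {l : ℕ} (q : ℕ) (i : Fin (l+3)) (h : (i:ℕ) = 0) : mcR q i = 0 := by
  simp [mcR, h]

lemma mcR_1 {l : ℕ} (q : ℕ) (i : Fin (l+3)) (h : (i:ℕ) = 1) : mcR q i = 2*(q:ℝ) := by
  simp [mcR, h]

lemma mcR_2 {l : ℕ} (q : ℕ) (i : Fin (l+3)) (h : 2 ≤ (i:ℕ)) : mcR q i = (q:ℝ) := by
  simp only [mcR]; rw [if_neg (by omega), if_neg (by omega)]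

lemma mcLen_0 {l : ℕ} (q : ℕ) (x : ℕ → ℕ) (i : Fin (l+3)) (h : (i:ℕ) = 0) :
    mcLen q x i = 4*((q:ℝ)+1) := by simp [mcLen, h]

lemma mcLen_1 {l : ℕ} (q : ℕ) (x : ℕ → ℕ) (i : Fin (l+3)) (h : (i:ℕ) = 1) :
    mcLen q x i = 1 := by simp [mcLen, h]

lemma mcLen_2 {l : ℕ} (q : ℕ) (x : ℕ → ℕ) (i : Fin (l+3)) (h : (i:ℕ) = 2) :
    mcLen q x i = 4*((q:ℝ)+1) := by simp [mcLen, h]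

lemma mcLen_m {l : ℕ} (q : ℕ) (x : ℕ → ℕ) (i : Fin (l+3)) (h : 3 ≤ (i:ℕ)) :
    mcLen q x i = (x ((i:ℕ) - 2) : ℝ) := by
  simp only [mcLen]; rw [if_neg (by omega), if_neg (by omega), if_neg (by omega)]

lemma mcLane_2 {l : ℕ} (i : Fin (l+3)) (h : (i:ℕ) = 2) : mcLane l i = l + 2 := by
  simp [mcLane, h]

lemma mcLane_m {l : ℕ} (i : Fin (l+3)) (h : 3 ≤ (i:ℕ)) : mcLane l i = (i:ℕ) - 1 := by
  simp only [mcLane]; rw [if_neg (by omega), if_neg (by omega), if_neg (by omega)]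

/-- If the associated MULTI-CROSS instance admits a valid schedule with delay at
most `2q + 1`, then the index set `{1, …, l}` can be partitioned into `U` and `V`
with `Σ_{i ∈ U} x i = Σ_{i ∈ V} x i = q`. -/
theorem stmt12 (l q : ℕ) (x : ℕ → ℕ) (hq : 0 < q)
    (hx : ∀ i, 1 ≤ i → i ≤ l → 0 < x i)
    (hsum : ∑ i ∈ Finset.Icc 1 l, x i = 2 * q)
    (h : ∃ c : Fin (l + 3) → ℝ, mcValid l q x c ∧
      ∀ i, c i - mcR q i ≤ 2 * (q : ℝ) + 1) :
    ∃ U V : Finset ℕ, U ∪ V = Finset.Icc 1 l ∧ Disjoint U V ∧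
      ∑ i ∈ U, x i = q ∧ ∑ i ∈ V, x i = q := by
  classical
  obtain ⟨c, ⟨hr, _, hdisj⟩, hdelay⟩ := h
  have hq1 : (1:ℝ) ≤ (q:ℝ) := by exact_mod_cast hq
  obtain ⟨i0, hv0⟩ : ∃ j : Fin (l+3), (j:ℕ) = 0 := ⟨⟨0, by omega⟩, rfl⟩
  obtain ⟨i1, hv1⟩ : ∃ j : Fin (l+3), (j:ℕ) = 1 := ⟨⟨1, by omega⟩, rfl⟩
  obtain ⟨i2, hv2⟩ : ∃ j : Fin (l+3), (j:ℕ) = 2 := ⟨⟨2, by omega⟩, rfl⟩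
  obtain ⟨f, hfv⟩ : ∃ f : ℕ → Fin (l+3), ∀ i ∈ Finset.Icc 1 l, ((f i):ℕ) = i + 2 := by
    refine ⟨fun i => ⟨min (i+2) (l+2), by omega⟩, fun i hi => ?_⟩
    have hi' := Finset.mem_Icc.mp hi
    show min (i+2) (l+2) = i + 2
    omega
  -- basic bounds
  have h0r : (0:ℝ) ≤ c i0 := by have := hr i0; rwa [mcR_0 q i0 hv0] at this
  have h0d : c i0 ≤ 2*(q:ℝ) + 1 := by
    have := hdelay i0; rw [mcR_0 q i0 hv0] at this; linarith
  have h1r : 2*(q:ℝ) ≤ c i1 := by have := hr i1; rwa [mcR_1 q i1 hv1] at this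
  have h1d : c i1 ≤ 4*(q:ℝ) + 1 := by
    have := hdelay i1; rw [mcR_1 q i1 hv1] at this; linarith
  have h2r : (q:ℝ) ≤ c i2 := by have := hr i2; rwa [mcR_2 q i2 (by omega)] at this
  have h2d : c i2 ≤ 3*(q:ℝ) + 1 := by
    have := hdelay i2; rw [mcR_2 q i2 (by omega)] at this; linarith
  have hfr : ∀ i ∈ Finset.Icc 1 l, (q:ℝ) ≤ c (f i) := by
    intro i hi
    have := hr (f i); rwa [mcR_2 q (f i) (by rw [hfv i hi]; omega)] at this
  have hfd : ∀ i ∈ Finset.Icc 1 l, c (f i) ≤ 3*(q:ℝ) + 1 := by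
    intro i hi
    have := hdelay (f i); rw [mcR_2 q (f i) (by rw [hfv i hi]; omega)] at this; linarith
  have hLf : ∀ i ∈ Finset.Icc 1 l, mcLen q x (f i) = (x i : ℝ) := by
    intro i hi
    have hi' := Finset.mem_Icc.mp hi
    rw [mcLen_m q x (f i) (by rw [hfv i hi]; omega), hfv i hi]
    norm_num
  have hxpos : ∀ i ∈ Finset.Icc 1 l, (0:ℝ) < (x i : ℝ) := by
    intro i hi
    have hi' := Finset.mem_Icc.mp hi
    exact_mod_cast hx i hi'.1 hi'.2
  -- c i1 = 2q
  have hc1 : c i1 = 2*(q:ℝ) := by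
    have hd01 := hdisj i0 i1 ⟨by rw [Fin.ne_iff_vne, hv0, hv1]; omega, Or.inr (Or.inl hv1)⟩
    rw [mcLen_0 q x i0 hv0, mcLen_1 q x i1 hv1] at hd01
    rcases disj_Ioo hd01 (by linarith) (by linarith) with h' | h' <;> linarith
  -- c i2 ≥ 2q + 1
  have hc2 : 2*(q:ℝ) + 1 ≤ c i2 := by
    have hd12 := hdisj i1 i2 ⟨by rw [Fin.ne_iff_vne, hv1, hv2]; omega, Or.inl hv1⟩
    rw [mcLen_1 q x i1 hv1, mcLen_2 q x i2 hv2] at hd12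
    rcases disj_Ioo hd12 (by linarith) (by linarith) with h' | h' <;> linarith
  -- each merge platoon ends before c i2
  have hub : ∀ i ∈ Finset.Icc 1 l, c (f i) + (x i : ℝ) ≤ c i2 := by
    intro i hi
    have hv := hfv i hi
    have hi' := Finset.mem_Icc.mp hi
    have hd2f := hdisj i2 (f i) ⟨by rw [Fin.ne_iff_vne, hv2, hv]; omega,
      Or.inr (Or.inr ⟨by omega, by rw [hv]; omega,
        by rw [mcLane_2 i2 hv2, mcLane_m (f i) (by rw [hv]; omega), hv]; omega⟩)⟩
    rw [mcLen_2 q x i2 hv2, hLf i hi] at hd2f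
    rcases disj_Ioo hd2f (by linarith) (by linarith [hxpos i hi]) with h' | h'
    · linarith [hfd i hi]
    · exact h'
  -- dichotomy
  have hdich : ∀ i ∈ Finset.Icc 1 l,
      c (f i) + (x i : ℝ) ≤ 2*(q:ℝ) ∨ 2*(q:ℝ) + 1 ≤ c (f i) := by
    intro i hi
    have hv := hfv i hi
    have hd1f := hdisj i1 (f i) ⟨by rw [Fin.ne_iff_vne, hv1, hv]; omega, Or.inl hv1⟩
    rw [mcLen_1 q x i1 hv1, hLf i hi] at hd1f
    rcases disj_Ioo hd1f (by linarith) (by linarith [hxpos i hi]) with h' | h'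
    · right; linarith
    · left; linarith
  -- pairwise disjoint merge intervals
  have hpair : ∀ i ∈ Finset.Icc 1 l, ∀ j ∈ Finset.Icc 1 l, i ≠ j →
      Disjoint (Set.Ioo (c (f i)) (c (f i) + (x i:ℝ)))
        (Set.Ioo (c (f j)) (c (f j) + (x j:ℝ))) := by
    intro i hi j hj hne
    have hi' := Finset.mem_Icc.mp hi
    have hj' := Finset.mem_Icc.mp hj
    have hvi := hfv i hi
    have hvj := hfv j hj
    have := hdisj (f i) (f j) ⟨by rw [Fin.ne_iff_vne, hvi, hvj]; omega,
      Or.inr (Or.inr ⟨by rw [hvi]; omega, by rw [hvj]; omega,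
        by rw [mcLane_m (f i) (by rw [hvi]; omega), mcLane_m (f j) (by rw [hvj]; omega),
          hvi, hvj]; omega⟩)⟩
    rwa [hLf i hi, hLf j hj] at this
  -- define the partition
  set U := (Finset.Icc 1 l).filter (fun i => c (f i) + (x i:ℝ) ≤ 2*(q:ℝ)) with hU
  set V := (Finset.Icc 1 l).filter (fun i => ¬ (c (f i) + (x i:ℝ) ≤ 2*(q:ℝ))) with hV
  have hUV : U ∪ V = Finset.Icc 1 l := Finset.filter_union_filter_not_eq _ _
  have hUVd : Disjoint U V := Finset.disjoint_filter_filter_not _ _ _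
  have hUsub : U ⊆ Finset.Icc 1 l := Finset.filter_subset _ _
  have hVsub : V ⊆ Finset.Icc 1 l := Finset.filter_subset _ _
  have hUle : ∑ i ∈ U, (x i : ℝ) ≤ (q:ℝ) := by
    have := sum_len_le U (fun i => c (f i)) (fun i => (x i:ℝ))
      (fun i hi => le_of_lt (hxpos i (hUsub hi))) (q:ℝ) (2*(q:ℝ)) (by linarith)
      (fun i hi => ⟨hfr i (hUsub hi), (Finset.mem_filter.mp hi).2⟩)
      (fun i hi j hj hne => hpair i (hUsub hi) j (hUsub hj) hne)
    linarith
  have hVle : ∑ i ∈ V, (x i : ℝ) ≤ (q:ℝ) := by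
    have := sum_len_le V (fun i => c (f i)) (fun i => (x i:ℝ))
      (fun i hi => le_of_lt (hxpos i (hVsub hi))) (2*(q:ℝ)+1) (3*(q:ℝ)+1) (by linarith)
      (fun i hi => ⟨by
          rcases hdich i (hVsub hi) with h' | h'
          · exact absurd h' (Finset.mem_filter.mp hi).2
          · exact h',
        le_trans (hub i (hVsub hi)) h2d⟩)
      (fun i hi j hj hne => hpair i (hVsub hi) j (hVsub hj) hne)
    linarith
  have hUn : ∑ i ∈ U, x i ≤ q := by
    have : ((∑ i ∈ U, x i : ℕ) : ℝ) ≤ (q:ℝ) := by push_cast; exact hUle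
    exact_mod_cast this
  have hVn : ∑ i ∈ V, x i ≤ q := by
    have : ((∑ i ∈ V, x i : ℕ) : ℝ) ≤ (q:ℝ) := by push_cast; exact hVle
    exact_mod_cast this
  have htot : ∑ i ∈ U, x i + ∑ i ∈ V, x i = 2 * q := by
    rw [← Finset.sum_union hUVd, hUV, hsum]
  exact ⟨U, V, hUV, hUVd, by omega, by omega⟩
end

section
/- Reduction correctness (core of NP-hardness of MULTI-CROSS): the associated MULTI-CROSS instance admits a valid schedule with delay at most 2q + 1 if and only if there is a partition of the index set {1, …, ℓ} into sets U and V with Σ_{i ∈ U} x_i = Σ_{i ∈ V} x_i = q. -/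
open Set MeasureTheory

lemma IooDisj {a c b d : ℝ} (h : c ≤ b ∨ d ≤ a) :
    Disjoint (Set.Ioo a c) (Set.Ioo b d) := by
  rw [Set.Ioo_disjoint_Ioo]
  rcases h with h | h
  · exact le_trans (min_le_left _ _) (h.trans (le_max_right _ _))
  · exact le_trans (min_le_right _ _) (h.trans (le_max_left _ _))

lemma disjCases {a b p s : ℝ} (hp : 0 < p) (hs : 0 < s)
    (h : Disjoint (Set.Ioo a (a + p)) (Set.Ioo b (b + s))) :
    a + p ≤ b ∨ b + s ≤ a := by
  rw [Set.Ioo_disjoint_Ioo] at h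
  rcases min_le_iff.mp h with h1 | h1 <;> rcases le_max_iff.mp h1 with h2 | h2
  · exact absurd h2 (by linarith)
  · exact Or.inl h2
  · exact Or.inr h2
  · exact absurd h2 (by linarith)

lemma sumLenLe (s : Finset ℕ) (a : ℕ → ℝ) (len : ℕ → ℝ) (A B : ℝ) (hAB : A ≤ B)
    (hlen : ∀ i ∈ s, 0 ≤ len i)
    (hsub : ∀ i ∈ s, A ≤ a i ∧ a i + len i ≤ B)
    (hdisj : (↑s : Set ℕ).PairwiseDisjoint (fun i => Set.Ioo (a i) (a i + len i))) :
    ∑ i ∈ s, len i ≤ B - A := by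
  have h1 : ∑ i ∈ s, ENNReal.ofReal (len i) ≤ ENNReal.ofReal (B - A) := by
    calc ∑ i ∈ s, ENNReal.ofReal (len i)
        = ∑ i ∈ s, volume (Set.Ioo (a i) (a i + len i)) := by
          refine Finset.sum_congr rfl fun i hi => ?_
          rw [Real.volume_Ioo, add_sub_cancel_left]
      _ = volume (⋃ i ∈ s, Set.Ioo (a i) (a i + len i)) :=
          (measure_biUnion_finset hdisj fun i _ => measurableSet_Ioo).symm
      _ ≤ volume (Set.Ioo A B) := by
          apply measure_mono
          exact Set.iUnion₂_subset fun i hi =>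
            Set.Ioo_subset_Ioo (hsub i hi).1 (hsub i hi).2
      _ = ENNReal.ofReal (B - A) := Real.volume_Ioo
  rw [← ENNReal.ofReal_sum_of_nonneg hlen] at h1
  exact (ENNReal.ofReal_le_ofReal_iff (by linarith)).mp h1

lemma psumLt {x : ℕ → ℕ} {s : Finset ℕ} {i j : ℕ} (hi : i ∈ s) (hij : i < j) :
    ∑ k ∈ s.filter (· < i), x k + x i ≤ ∑ k ∈ s.filter (· < j), x k := by
  have hsub : insert i (s.filter (· < i)) ⊆ s.filter (· < j) := by
    intro k hk
    simp only [Finset.mem_insert, Finset.mem_filter] at hk ⊢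
    rcases hk with rfl | ⟨hk1, hk2⟩
    · exact ⟨hi, hij⟩
    · exact ⟨hk1, lt_trans hk2 hij⟩
  have := Finset.sum_le_sum_of_subset (f := x) hsub
  rw [Finset.sum_insert (by simp)] at this
  omega

lemma psumTotal {x : ℕ → ℕ} {s : Finset ℕ} {i : ℕ} (hi : i ∈ s) :
    ∑ k ∈ s.filter (· < i), x k + x i ≤ ∑ k ∈ s, x k := by
  have hsub : insert i (s.filter (· < i)) ⊆ s := by
    intro k hk
    simp only [Finset.mem_insert, Finset.mem_filter] at hk
    rcases hk with rfl | ⟨hk1, _⟩ <;> assumption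
  have := Finset.sum_le_sum_of_subset (f := x) hsub
  rw [Finset.sum_insert (by simp)] at this
  omega


lemma mcLaneInj {l : ℕ} {i j : Fin (l + 3)} (h : mcLane l i = mcLane l j) : i = j := by
  have hi := i.isLt; have hj := j.isLt
  apply Fin.ext
  simp only [mcLane] at h
  split_ifs at h <;> omega

theorem fwd (l q : ℕ) (x : ℕ → ℕ) (hq : 0 < q)
    (hx : ∀ i, 1 ≤ i → i ≤ l → 0 < x i)
    (hsum : ∑ i ∈ Finset.Icc 1 l, x i = 2 * q) :
    (∃ c : Fin (l + 3) → ℝ, mcValid l q x c ∧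
        ∀ i, c i - mcR q i ≤ 2 * (q : ℝ) + 1) →
      ∃ U V : Finset ℕ, U ∪ V = Finset.Icc 1 l ∧ Disjoint U V ∧
        ∑ i ∈ U, x i = q ∧ ∑ i ∈ V, x i = q := by
  classical
  rintro ⟨c, ⟨hr, -, hdj⟩, hdel⟩
  set Q : ℝ := (q : ℝ) with hQdef
  have hQ1 : (1 : ℝ) ≤ Q := by rw [hQdef]; exact_mod_cast Nat.one_le_iff_ne_zero.mpr (Nat.pos_iff_ne_zero.mp hq)
  obtain ⟨i0, hi0⟩ : ∃ i : Fin (l+3), (i : ℕ) = 0 := ⟨⟨0, by omega⟩, rfl⟩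
  obtain ⟨i1, hi1⟩ : ∃ i : Fin (l+3), (i : ℕ) = 1 := ⟨⟨1, by omega⟩, rfl⟩
  obtain ⟨i2, hi2⟩ : ∃ i : Fin (l+3), (i : ℕ) = 2 := ⟨⟨2, by omega⟩, rfl⟩
  obtain ⟨pk, hpk⟩ : ∃ p : ℕ → Fin (l+3), ∀ n, n ≤ l → (p n : ℕ) = n + 2 :=
    ⟨fun n => ⟨(n+2) % (l+3), Nat.mod_lt _ (by omega)⟩,
     fun n hn => Nat.mod_eq_of_lt (by omega)⟩
  -- basic values
  have hL0 : mcLen q x i0 = 4*(Q+1) := by simp [mcLen, hi0, hQdef]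
  have hL1 : mcLen q x i1 = 1 := by simp [mcLen, hi1]
  have hL2 : mcLen q x i2 = 4*(Q+1) := by simp [mcLen, hi2, hQdef]
  have hR0 : mcR q i0 = 0 := by simp [mcR, hi0]
  have hR1 : mcR q i1 = 2*Q := by simp [mcR, hi1, hQdef]
  have hR2 : mcR q i2 = Q := by simp [mcR, hi2, hQdef]
  have hr0 : (0:ℝ) ≤ c i0 := by have := hr i0; rwa [hR0] at this
  have hd0 : c i0 ≤ 2*Q + 1 := by have := hdel i0; rw [hR0] at this; linarith
  have hr1 : 2*Q ≤ c i1 := by have := hr i1; rwa [hR1] at this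
  have hd1 : c i1 ≤ 4*Q + 1 := by have := hdel i1; rw [hR1] at this; linarith
  have hr2 : Q ≤ c i2 := by have := hr i2; rwa [hR2] at this
  have hd2 : c i2 ≤ 3*Q + 1 := by have := hdel i2; rw [hR2] at this; linarith
  -- p1 vs p2
  have hI01 : mcIncompat l i0 i1 := by
    refine ⟨fun h => ?_, Or.inr (Or.inl hi1)⟩
    rw [h, hi1] at hi0; omega
  have h01 := disjCases (by rw [hL0]; linarith) (by rw [hL1]; norm_num) (hdj i0 i1 hI01)
  rw [hL0, hL1] at h01
  have e1 : c i1 = 2*Q := by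
    rcases h01 with h | h
    · linarith
    · linarith
  have hc0lo : 2*Q + 1 ≤ c i0 := by
    rcases h01 with h | h
    · linarith
    · linarith
  -- p2 vs p3
  have hI12 : mcIncompat l i1 i2 := by
    refine ⟨fun h => ?_, Or.inl hi1⟩
    rw [h, hi2] at hi1; omega
  have h12 := disjCases (by rw [hL1]; norm_num) (by rw [hL2]; linarith) (hdj i1 i2 hI12)
  rw [hL1, hL2] at h12
  have hc2lo : 2*Q + 1 ≤ c i2 := by
    rcases h12 with h | h
    · linarith
    · linarith
  -- merge platoon facts
  have hmem : ∀ n ∈ Finset.Icc 1 l, 1 ≤ n ∧ n ≤ l := fun n hn => Finset.mem_Icc.mp hn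
  have hLk : ∀ n ∈ Finset.Icc 1 l, mcLen q x (pk n) = x n := by
    intro n hn
    obtain ⟨h1, h2⟩ := hmem n hn
    rw [mcLen, hpk n h2]
    simp [show n+2 ≠ 0 by omega, show n+2 ≠ 1 by omega, show n+2 ≠ 2 by omega, show n ≠ 0 by omega]
  have hlanek : ∀ n ∈ Finset.Icc 1 l, mcLane l (pk n) = n + 1 := by
    intro n hn
    obtain ⟨h1, h2⟩ := hmem n hn
    rw [mcLane, hpk n h2]
    simp [show n+2 ≠ 0 by omega, show n+2 ≠ 1 by omega, show n+2 ≠ 2 by omega, show n ≠ 0 by omega]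
  have hxpos : ∀ n ∈ Finset.Icc 1 l, (0:ℝ) < x n := by
    intro n hn
    obtain ⟨h1, h2⟩ := hmem n hn
    exact_mod_cast hx n h1 h2
  have hrk : ∀ n ∈ Finset.Icc 1 l, Q ≤ c (pk n) := by
    intro n hn
    obtain ⟨h1, h2⟩ := hmem n hn
    have := hr (pk n)
    rw [mcR, hpk n h2] at this
    simpa [show n+2 ≠ 0 by omega, show n+2 ≠ 1 by omega] using this
  have hdk : ∀ n ∈ Finset.Icc 1 l, c (pk n) ≤ 3*Q + 1 := by
    intro n hn
    obtain ⟨h1, h2⟩ := hmem n hn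
    have := hdel (pk n)
    rw [mcR, hpk n h2] at this
    simp only [show n+2 ≠ 0 by omega, show n+2 ≠ 1 by omega, if_false, if_neg] at this
    · linarith
  -- merge platoons must finish before p3
  have hend : ∀ n ∈ Finset.Icc 1 l, c (pk n) + x n ≤ c i2 := by
    intro n hn
    obtain ⟨h1, h2⟩ := hmem n hn
    have hI : mcIncompat l (pk n) i2 := by
      refine ⟨fun h => ?_, Or.inr (Or.inr ⟨by rw [hpk n h2]; omega, by rw [hi2], ?_⟩)⟩
      · have hh := hpk n h2
        rw [h, hi2] at hh; omega
      · rw [hlanek n hn]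
        simp [mcLane, hi2]
        omega
    have := disjCases (p := mcLen q x (pk n)) (s := mcLen q x i2)
      (by rw [hLk n hn]; exact hxpos n hn) (by rw [hL2]; linarith) (hdj (pk n) i2 hI)
    rw [hLk n hn, hL2] at this
    rcases this with h | h
    · exact h
    · exfalso; have := hdk n hn; linarith [hrk n hn, hr2, hc2lo]
  -- merge platoons avoid p2's slot (2q, 2q+1)
  have hdich : ∀ n ∈ Finset.Icc 1 l, c (pk n) + x n ≤ 2*Q ∨ 2*Q + 1 ≤ c (pk n) := by
    intro n hn
    obtain ⟨h1, h2⟩ := hmem n hn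
    have hI : mcIncompat l (pk n) i1 := by
      refine ⟨fun h => ?_, Or.inr (Or.inl hi1)⟩
      have := hpk n h2
      rw [h, hi1] at this; omega
    have := disjCases (p := mcLen q x (pk n)) (s := mcLen q x i1)
      (by rw [hLk n hn]; exact hxpos n hn) (by rw [hL1]; norm_num) (hdj (pk n) i1 hI)
    rw [hLk n hn, hL1, e1] at this
    rcases this with h | h
    · exact Or.inl h
    · exact Or.inr (by linarith)
  -- pairwise disjointness of merge intervals
  have hpdisj : ∀ m ∈ Finset.Icc 1 l, ∀ n ∈ Finset.Icc 1 l, m ≠ n →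
      Disjoint (Set.Ioo (c (pk m)) (c (pk m) + (x m : ℝ)))
               (Set.Ioo (c (pk n)) (c (pk n) + (x n : ℝ))) := by
    intro m hm n hn hmn
    have hI : mcIncompat l (pk m) (pk n) := by
      refine ⟨fun h => ?_, Or.inr (Or.inr ⟨?_, ?_, ?_⟩)⟩
      · have h1 := hpk m (hmem m hm).2
        have h2 := hpk n (hmem n hn).2
        rw [h] at h1; omega
      · rw [hpk m (hmem m hm).2]; omega
      · rw [hpk n (hmem n hn).2]; omega
      · rw [hlanek m hm, hlanek n hn]; omega
    have := hdj (pk m) (pk n) hI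
    rwa [hLk m hm, hLk n hn] at this
  -- define the partition
  set U : Finset ℕ := (Finset.Icc 1 l).filter (fun n => c (pk n) + (x n : ℝ) ≤ 2*Q) with hUdef
  set V : Finset ℕ := (Finset.Icc 1 l).filter (fun n => ¬ (c (pk n) + (x n : ℝ) ≤ 2*Q)) with hVdef
  have hUV : U ∪ V = Finset.Icc 1 l := Finset.filter_union_filter_not_eq _ _
  have hUVd : Disjoint U V := Finset.disjoint_filter_filter_not _ _ _
  have hU' : ∀ n ∈ U, n ∈ Finset.Icc 1 l ∧ c (pk n) + (x n : ℝ) ≤ 2*Q := by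
    intro n hn; exact Finset.mem_filter.mp hn
  have hV' : ∀ n ∈ V, n ∈ Finset.Icc 1 l ∧ ¬ (c (pk n) + (x n : ℝ) ≤ 2*Q) := by
    intro n hn; exact Finset.mem_filter.mp hn
  have hsU : ∑ n ∈ U, (x n : ℝ) ≤ Q := by
    have := sumLenLe U (fun n => c (pk n)) (fun n => (x n : ℝ)) Q (2*Q) (by linarith)
      (fun n hn => by positivity)
      (fun n hn => ⟨hrk n (hU' n hn).1, (hU' n hn).2⟩)
      (fun m hm n hn hmn => hpdisj m (hU' m (by exact_mod_cast hm)).1 n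
        (hU' n (by exact_mod_cast hn)).1 hmn)
    linarith
  have hsV : ∑ n ∈ V, (x n : ℝ) ≤ Q := by
    have := sumLenLe V (fun n => c (pk n)) (fun n => (x n : ℝ)) (2*Q+1) (3*Q+1) (by linarith)
      (fun n hn => by positivity)
      (fun n hn => by
        have h1 := (hV' n hn).1
        have h2 := (hV' n hn).2
        rcases hdich n h1 with h | h
        · exact absurd h h2
        · exact ⟨h, le_trans (hend n h1) hd2⟩)
      (fun m hm n hn hmn => hpdisj m (hV' m (by exact_mod_cast hm)).1 n
        (hV' n (by exact_mod_cast hn)).1 hmn)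
    linarith
  have hnU : ∑ n ∈ U, x n ≤ q := by
    have h : ((∑ n ∈ U, x n : ℕ) : ℝ) ≤ Q := by push_cast; exact hsU
    rw [hQdef] at h; exact_mod_cast h
  have hnV : ∑ n ∈ V, x n ≤ q := by
    have h : ((∑ n ∈ V, x n : ℕ) : ℝ) ≤ Q := by push_cast; exact hsV
    rw [hQdef] at h; exact_mod_cast h
  have htot : ∑ n ∈ U, x n + ∑ n ∈ V, x n = 2*q := by
    rw [← Finset.sum_union hUVd, hUV]; exact hsum
  exact ⟨U, V, hUV, hUVd, by omega, by omega⟩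

theorem bwd (l q : ℕ) (x : ℕ → ℕ) (hq : 0 < q)
    (hx : ∀ i, 1 ≤ i → i ≤ l → 0 < x i)
    (hsum : ∑ i ∈ Finset.Icc 1 l, x i = 2 * q) :
    (∃ U V : Finset ℕ, U ∪ V = Finset.Icc 1 l ∧ Disjoint U V ∧
        ∑ i ∈ U, x i = q ∧ ∑ i ∈ V, x i = q) →
    (∃ c : Fin (l + 3) → ℝ, mcValid l q x c ∧
        ∀ i, c i - mcR q i ≤ 2 * (q : ℝ) + 1) := by
  classical
  rintro ⟨U, V, hUV, hUVd, hU, hV⟩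
  have hQ0 : (0 : ℝ) ≤ (q : ℝ) := Nat.cast_nonneg _
  obtain ⟨st, hst⟩ : ∃ st : ℕ → ℝ, ∀ n, st n =
      if n ∈ U then (q : ℝ) + ((∑ k ∈ U.filter (· < n), x k : ℕ) : ℝ)
      else 2*(q:ℝ) + 1 + ((∑ k ∈ V.filter (· < n), x k : ℕ) : ℝ) := ⟨_, fun n => rfl⟩
  obtain ⟨c, hc⟩ : ∃ c : Fin (l+3) → ℝ, ∀ k : Fin (l+3), c k =
      if (k:ℕ) = 0 then 2*(q:ℝ)+1 else if (k:ℕ) = 1 then 2*(q:ℝ)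
      else if (k:ℕ) = 2 then 3*(q:ℝ)+1 else st ((k:ℕ) - 2) := ⟨_, fun k => rfl⟩
  have hmemIcc : ∀ n, n ∈ Finset.Icc 1 l → n ∈ U ∨ n ∈ V := by
    intro n hn; rw [← hUV] at hn; exact Finset.mem_union.mp hn
  have hstU : ∀ n ∈ U, (q:ℝ) ≤ st n ∧ st n + (x n : ℝ) ≤ 2*(q:ℝ) := by
    intro n hn
    rw [hst n, if_pos hn]
    have h0 : (0:ℝ) ≤ ((∑ k ∈ U.filter (· < n), x k : ℕ):ℝ) := Nat.cast_nonneg _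
    have h := psumTotal (x := x) hn
    rw [hU] at h
    have h' : ((∑ k ∈ U.filter (· < n), x k : ℕ):ℝ) + (x n:ℝ) ≤ (q:ℝ) := by
      exact_mod_cast h
    exact ⟨by linarith, by linarith⟩
  have hstV : ∀ n ∈ V, 2*(q:ℝ)+1 ≤ st n ∧ st n + (x n : ℝ) ≤ 3*(q:ℝ)+1 := by
    intro n hn
    have hnU : n ∉ U := fun h => (Finset.disjoint_left.mp hUVd h) hn
    rw [hst n, if_neg hnU]
    have h0 : (0:ℝ) ≤ ((∑ k ∈ V.filter (· < n), x k : ℕ):ℝ) := Nat.cast_nonneg _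
    have h := psumTotal (x := x) hn
    rw [hV] at h
    have h' : ((∑ k ∈ V.filter (· < n), x k : ℕ):ℝ) + (x n:ℝ) ≤ (q:ℝ) := by
      exact_mod_cast h
    exact ⟨by linarith, by linarith⟩
  have hultU : ∀ m ∈ U, ∀ n ∈ U, m < n → st m + (x m:ℝ) ≤ st n := by
    intro m hm n hn hmn
    rw [hst m, if_pos hm, hst n, if_pos hn]
    have h := psumLt (x := x) hm hmn
    have h' : ((∑ k ∈ U.filter (· < m), x k : ℕ):ℝ) + (x m:ℝ) ≤
        ((∑ k ∈ U.filter (· < n), x k : ℕ):ℝ) := by exact_mod_cast h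
    linarith
  have hultV : ∀ m ∈ V, ∀ n ∈ V, m < n → st m + (x m:ℝ) ≤ st n := by
    intro m hm n hn hmn
    have hmU : m ∉ U := fun h => (Finset.disjoint_left.mp hUVd h) hm
    have hnU : n ∉ U := fun h => (Finset.disjoint_left.mp hUVd h) hn
    rw [hst m, if_neg hmU, hst n, if_neg hnU]
    have h := psumLt (x := x) hm hmn
    have h' : ((∑ k ∈ V.filter (· < m), x k : ℕ):ℝ) + (x m:ℝ) ≤
        ((∑ k ∈ V.filter (· < n), x k : ℕ):ℝ) := by exact_mod_cast h
    linarith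
  have hmrg : ∀ k : Fin (l+3), 3 ≤ (k:ℕ) → ((k:ℕ)-2) ∈ Finset.Icc 1 l := by
    intro k hk
    have := k.isLt
    exact Finset.mem_Icc.mpr ⟨by omega, by omega⟩
  have hlen3 : ∀ k : Fin (l+3), 3 ≤ (k:ℕ) → mcLen q x k = x ((k:ℕ)-2) := by
    intro k hk
    rw [mcLen]
    simp [show (k:ℕ) ≠ 0 by omega, show (k:ℕ) ≠ 1 by omega, show (k:ℕ) ≠ 2 by omega]
  -- merge intervals are within [q, 3q+1]
  have hstb : ∀ n, n ∈ Finset.Icc 1 l → (q:ℝ) ≤ st n ∧ st n + (x n:ℝ) ≤ 3*(q:ℝ)+1 := by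
    intro n hn
    rcases hmemIcc n hn with h | h
    · exact ⟨(hstU n h).1, by linarith [(hstU n h).2]⟩
    · exact ⟨by linarith [(hstV n h).1], (hstV n h).2⟩
  -- key disjointness with platoon 1's slot (2q, 2q+1)
  have key1 : ∀ j : Fin (l+3), (j:ℕ) ≠ 1 →
      Disjoint (Set.Ioo (2*(q:ℝ)) (2*(q:ℝ)+1)) (Set.Ioo (c j) (c j + mcLen q x j)) := by
    intro j hj1
    by_cases hj0 : (j:ℕ) = 0
    · rw [hc j, if_pos hj0, mcLen, if_pos hj0]
      exact IooDisj (Or.inl (le_refl _))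
    by_cases hj2 : (j:ℕ) = 2
    · rw [hc j, if_neg hj0, if_neg hj1, if_pos hj2, mcLen, if_neg hj0, if_neg hj1, if_pos hj2]
      exact IooDisj (Or.inl (by linarith))
    · have hj3 : 3 ≤ (j:ℕ) := by have := j.isLt; omega
      rw [hc j, if_neg hj0, if_neg hj1, if_neg hj2, hlen3 j hj3]
      rcases hmemIcc _ (hmrg j hj3) with h | h
      · exact IooDisj (Or.inr (by linarith [(hstU _ h).2]))
      · exact IooDisj (Or.inl (by linarith [(hstV _ h).1]))
  -- key disjointness of platoon 2 (p3) with merge platoons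
  have key2 : ∀ j : Fin (l+3), 3 ≤ (j:ℕ) →
      Disjoint (Set.Ioo (3*(q:ℝ)+1) (3*(q:ℝ)+1 + 4*((q:ℝ)+1)))
               (Set.Ioo (c j) (c j + mcLen q x j)) := by
    intro j hj3
    rw [hc j, if_neg (by omega), if_neg (by omega), if_neg (by omega), hlen3 j hj3]
    exact IooDisj (Or.inr (hstb _ (hmrg j hj3)).2)
  have hlenv1 : ∀ k : Fin (l+3), (k:ℕ) = 1 → mcLen q x k = 1 := by
    intro k hk; rw [mcLen]; simp [hk]
  have hlenv2 : ∀ k : Fin (l+3), (k:ℕ) = 2 → mcLen q x k = 4*((q:ℝ)+1) := by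
    intro k hk; rw [mcLen]; simp [hk]
  have hcv1 : ∀ k : Fin (l+3), (k:ℕ) = 1 → c k = 2*(q:ℝ) := by
    intro k hk; rw [hc k]; simp [hk]
  have hcv2 : ∀ k : Fin (l+3), (k:ℕ) = 2 → c k = 3*(q:ℝ)+1 := by
    intro k hk; rw [hc k]; simp [hk]
  refine ⟨c, ⟨?_, ?_, ?_⟩, ?_⟩
  · -- release times
    intro i
    rw [mcR, hc i]
    by_cases h0 : (i:ℕ) = 0
    · rw [if_pos h0, if_pos h0]; linarith
    by_cases h1 : (i:ℕ) = 1
    · rw [if_neg h0, if_pos h1, if_neg h0, if_pos h1]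
    by_cases h2 : (i:ℕ) = 2
    · rw [if_neg h0, if_neg h1, if_neg h0, if_neg h1, if_pos h2]; linarith
    · rw [if_neg h0, if_neg h1, if_neg h0, if_neg h1, if_neg h2]
      have h3 : 3 ≤ (i:ℕ) := by have := i.isLt; omega
      exact (hstb _ (hmrg i h3)).1
  · -- same-lane condition is vacuous
    intro i j hne hlane _
    exact absurd (mcLaneInj hlane) hne
  · -- disjointness
    rintro i j ⟨hne, hcase⟩
    rcases hcase with h1 | h1 | ⟨hi2, hj2, hlne⟩
    · have hj1 : (j:ℕ) ≠ 1 := fun h => hne (Fin.ext (h1.trans h.symm))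
      have hkey := key1 j hj1
      rw [hcv1 i h1, hlenv1 i h1]
      exact hkey
    · have hi1 : (i:ℕ) ≠ 1 := fun h => hne (Fin.ext (h.trans h1.symm))
      have hkey := (key1 i hi1).symm
      rw [hcv1 j h1, hlenv1 j h1]
      exact hkey
    · by_cases hi2' : (i:ℕ) = 2
      · by_cases hj2' : (j:ℕ) = 2
        · exact absurd (Fin.ext (hi2'.trans hj2'.symm)) hne
        · have hj3 : 3 ≤ (j:ℕ) := by have := j.isLt; omega
          have hkey := key2 j hj3
          rw [hcv2 i hi2', hlenv2 i hi2']
          exact hkey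
      · by_cases hj2' : (j:ℕ) = 2
        · have hi3 : 3 ≤ (i:ℕ) := by have := i.isLt; omega
          have hkey := (key2 i hi3).symm
          rw [hcv2 j hj2', hlenv2 j hj2']
          exact hkey
        · have hi3 : 3 ≤ (i:ℕ) := by omega
          have hj3 : 3 ≤ (j:ℕ) := by omega
          have hmn : (i:ℕ) - 2 ≠ (j:ℕ) - 2 := by
            intro h; exact hne (Fin.ext (by omega))
          rw [hc i, if_neg (by omega), if_neg (by omega), if_neg hi2', hlen3 i hi3,
            hc j, if_neg (by omega), if_neg (by omega), if_neg hj2', hlen3 j hj3]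
          apply IooDisj
          have hm' := hmrg i hi3
          have hn' := hmrg j hj3
          rcases hmemIcc _ hm' with hmU | hmV <;> rcases hmemIcc _ hn' with hnU | hnV
          · rcases Nat.lt_or_ge ((i:ℕ)-2) ((j:ℕ)-2) with h | h
            · exact Or.inl (hultU _ hmU _ hnU h)
            · exact Or.inr (hultU _ hnU _ hmU (by omega))
          · exact Or.inl (by linarith [(hstU _ hmU).2, (hstV _ hnV).1])
          · exact Or.inr (by linarith [(hstU _ hnU).2, (hstV _ hmV).1])
          · rcases Nat.lt_or_ge ((i:ℕ)-2) ((j:ℕ)-2) with h | h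
            · exact Or.inl (hultV _ hmV _ hnV h)
            · exact Or.inr (hultV _ hnV _ hmV (by omega))
  · -- delay bound
    intro i
    rw [mcR, hc i]
    by_cases h0 : (i:ℕ) = 0
    · rw [if_pos h0, if_pos h0]; linarith
    by_cases h1 : (i:ℕ) = 1
    · rw [if_neg h0, if_pos h1, if_neg h0, if_pos h1]; linarith
    by_cases h2 : (i:ℕ) = 2
    · rw [if_neg h0, if_neg h1, if_pos h2, if_neg h0, if_neg h1]; linarith
    · rw [if_neg h0, if_neg h1, if_neg h2, if_neg h0, if_neg h1]
      have h3 : 3 ≤ (i:ℕ) := by have := i.isLt; omega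
      have hb := hstb _ (hmrg i h3)
      have hx0 : (0:ℝ) ≤ (x ((i:ℕ)-2) : ℝ) := Nat.cast_nonneg _
      linarith [hb.2]

/-- Reduction correctness (core of the NP-hardness of MULTI-CROSS): the
associated MULTI-CROSS instance admits a valid schedule with delay at most
`2q + 1` if and only if the index set `{1, …, l}` can be partitioned into `U`
and `V` with `Σ_{i ∈ U} x i = Σ_{i ∈ V} x i = q`. -/
theorem stmt13 (l q : ℕ) (x : ℕ → ℕ) (hq : 0 < q)
    (hx : ∀ i, 1 ≤ i → i ≤ l → 0 < x i)
    (hsum : ∑ i ∈ Finset.Icc 1 l, x i = 2 * q) :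
    (∃ c : Fin (l + 3) → ℝ, mcValid l q x c ∧
        ∀ i, c i - mcR q i ≤ 2 * (q : ℝ) + 1) ↔
      ∃ U V : Finset ℕ, U ∪ V = Finset.Icc 1 l ∧ Disjoint U V ∧
        ∑ i ∈ U, x i = q ∧ ∑ i ∈ V, x i = q := by
  exact ⟨fwd l q x hq hx hsum, bwd l q x hq hx hsum⟩
end
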